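/- arXiv:1810.11436 — 9 statements merged into one kernel-verified Lean document; each statement's English description precedes it below -/
import Mathlib

section
/- For every integer s ≥ 2, c_s < (1/4) · exp( (s·log(2s) + (1/4)·log s) / (s(s−1)) ), where c_s := ∏_{j=1}^{s} ((j-1)^{2(j-1)} · j^j / (s+j-2)^{s+j-2})^{1/(s(s-1))}. -/
/-- The constant `c_s` from the paper. -/
noncomputable def letendreC (s : ℕ) : ℝ :=
  ∏ j ∈ Finset.Icc 1 s,
    (((j - 1 : ℝ) ^ (2 * (j - 1)) * (j : ℝ) ^ j / ((s : ℝ) + j - 2) ^ (s + j - 2))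
      ^ ((1 : ℝ) / (s * (s - 1))))

open Real

set_option maxHeartbeats 1000000


/-- Trapezoid upper bound for log. -/
lemma log_le_trap {t : ℝ} (ht : 1 ≤ t) : Real.log t ≤ (t - t⁻¹) / 2 := by
  have h0 : (0:ℝ) < t := lt_of_lt_of_le one_pos ht
  have h2 : Real.log t ≤ Real.sinh (Real.log t) :=
    Real.self_le_sinh_iff.mpr (Real.log_nonneg ht)
  rwa [Real.sinh_log h0] at h2

/-- sinh x ≤ x * cosh x for x ≥ 0. -/
lemma sinh_le_mul_cosh {x : ℝ} (hx : 0 ≤ x) : Real.sinh x ≤ x * Real.cosh x := by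
  have hmono : Monotone (fun y : ℝ => y * Real.cosh y - Real.sinh y) := by
    apply monotone_of_deriv_nonneg (by fun_prop)
    intro y
    have hd : deriv (fun y : ℝ => y * Real.cosh y - Real.sinh y) y
        = y * Real.sinh y := by
      rw [deriv_fun_sub (by fun_prop) (by fun_prop), deriv_fun_mul (by fun_prop) (by fun_prop)]
      rw [Real.deriv_cosh, Real.deriv_sinh]
      simp
    rw [hd]
    rcases le_or_gt 0 y with h | h
    · exact mul_nonneg h (Real.sinh_nonneg_iff.mpr h)
    · have h1 : Real.sinh y ≤ 0 := Real.sinh_nonpos_iff.mpr h.le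
      nlinarith
  have := hmono hx
  simp at this
  linarith

/-- Midpoint lower bound for log. -/
lemma midpoint_le_log {t : ℝ} (ht : 1 ≤ t) : 2 * (t - 1) / (t + 1) ≤ Real.log t := by
  have h0 : (0:ℝ) < t := lt_of_lt_of_le one_pos ht
  set u := Real.sqrt t with hu
  have hu1 : 1 ≤ u := by
    rw [hu, show (1:ℝ) = Real.sqrt 1 by simp]
    exact Real.sqrt_le_sqrt ht
  have hu0 : (0:ℝ) < u := lt_of_lt_of_le one_pos hu1
  have husq : u ^ 2 = t := Real.sq_sqrt h0.le
  have hlog : Real.log t = 2 * Real.log u := by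
    rw [hu, Real.log_sqrt h0.le]; ring
  have h2 := sinh_le_mul_cosh (Real.log_nonneg hu1)
  rw [Real.sinh_log hu0, Real.cosh_log hu0] at h2
  -- (u - u⁻¹)/2 ≤ log u * (u + u⁻¹)/2
  have hden : (0:ℝ) < u + u⁻¹ := by positivity
  have hlogu : (u - u⁻¹) / (u + u⁻¹) ≤ Real.log u := by
    rw [div_le_iff₀ hden]
    nlinarith
  have hq : (u - u⁻¹) / (u + u⁻¹) = (t - 1) / (t + 1) := by
    rw [← husq]
    field_simp
  rw [hlog]
  rw [hq] at hlogu
  have : 2 * (t - 1) / (t + 1) = 2 * ((t - 1) / (t + 1)) := by ring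
  linarith

lemma log_div_le {c d : ℝ} (hd : 0 < d) (hdc : d ≤ c) :
    Real.log (c/d) ≤ (c^2 - d^2)/(2*c*d) := by
  have hc : (0:ℝ) < c := lt_of_lt_of_le hd hdc
  have ht : 1 ≤ c/d := (le_div_iff₀ hd).mpr (by linarith)
  have h := log_le_trap ht
  have he : ((c/d) - (c/d)⁻¹)/2 = (c^2-d^2)/(2*c*d) := by
    rw [inv_div]; field_simp
  linarith [he ▸ h]

lemma le_log_div {c d : ℝ} (hd : 0 < d) (hdc : d ≤ c) :
    2*(c-d)/(c+d) ≤ Real.log (c/d) := by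
  have hc : (0:ℝ) < c := lt_of_lt_of_le hd hdc
  have ht : 1 ≤ c/d := (le_div_iff₀ hd).mpr (by linarith)
  have h := midpoint_le_log ht
  have he : 2*((c/d)-1)/((c/d)+1) = 2*(c-d)/(c+d) := by
    rw [div_eq_div_iff (by positivity) (by positivity)]; field_simp
  linarith [he ▸ h]

lemma h128eq : Real.log ((128:ℝ)/125) = 7*Real.log 2 - 3*Real.log 5 := by
  rw [Real.log_div (by norm_num) (by norm_num),
    show (128:ℝ) = 2^7 by norm_num, show (125:ℝ) = 5^3 by norm_num,
    Real.log_pow, Real.log_pow]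
  push_cast; ring

lemma h81eq : Real.log ((81:ℝ)/80) = 4*Real.log 3 - 4*Real.log 2 - Real.log 5 := by
  rw [Real.log_div (by norm_num) (by norm_num),
    show (81:ℝ) = 3^4 by norm_num, show (80:ℝ) = 2^4*5 by norm_num,
    Real.log_mul (by norm_num) (by norm_num), Real.log_pow, Real.log_pow]
  push_cast; ring

lemma h2401eq : Real.log ((2401:ℝ)/2400) =
    4*Real.log 7 - 5*Real.log 2 - Real.log 3 - 2*Real.log 5 := by
  rw [Real.log_div (by norm_num) (by norm_num),
    show (2401:ℝ) = 7^4 by norm_num, show (2400:ℝ) = 2^5*(3*5^2) by norm_num,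
    Real.log_mul (by norm_num) (by norm_num), Real.log_mul (by norm_num) (by norm_num),
    Real.log_pow, Real.log_pow, Real.log_pow]
  push_cast; ring

lemma log5_bounds : (160943717:ℝ)/100000000 < Real.log 5 ∧
    Real.log 5 < (160943829:ℝ)/100000000 := by
  have h1 := log_div_le (show (0:ℝ) < 125 by norm_num) (show (125:ℝ) ≤ 128 by norm_num)
  have h2 := le_log_div (show (0:ℝ) < 125 by norm_num) (show (125:ℝ) ≤ 128 by norm_num)
  rw [h128eq] at h1 h2
  have l2a := Real.log_two_gt_d9
  have l2b := Real.log_two_lt_d9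
  norm_num at h1 h2 ⊢
  constructor <;> linarith

lemma log3_bounds : (109861206:ℝ)/100000000 < Real.log 3 ∧
    Real.log 3 < (109861247:ℝ)/100000000 := by
  have h1 := log_div_le (show (0:ℝ) < 80 by norm_num) (show (80:ℝ) ≤ 81 by norm_num)
  have h2 := le_log_div (show (0:ℝ) < 80 by norm_num) (show (80:ℝ) ≤ 81 by norm_num)
  rw [h81eq] at h1 h2
  have l2a := Real.log_two_gt_d9
  have l2b := Real.log_two_lt_d9
  have l5 := log5_bounds
  norm_num at h1 h2 ⊢
  constructor <;> linarith [l5.1, l5.2]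

lemma log7_bounds : (194590972:ℝ)/100000000 < Real.log 7 ∧
    Real.log 7 < (194591039:ℝ)/100000000 := by
  have h1 := log_div_le (show (0:ℝ) < 2400 by norm_num) (show (2400:ℝ) ≤ 2401 by norm_num)
  have h2 := le_log_div (show (0:ℝ) < 2400 by norm_num) (show (2400:ℝ) ≤ 2401 by norm_num)
  rw [h2401eq] at h1 h2
  have l2a := Real.log_two_gt_d9
  have l2b := Real.log_two_lt_d9
  have l5 := log5_bounds
  have l3 := log3_bounds
  norm_num at h1 h2 ⊢
  constructor <;> linarith [l5.1, l5.2, l3.1, l3.2]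

noncomputable def auxF (n : ℕ) : ℝ := ∑ k ∈ Finset.range (n+1), (k:ℝ) * Real.log k

lemma auxF_succ (n : ℕ) : auxF (n+1) = auxF n + ((n:ℝ)+1) * Real.log ((n:ℝ)+1) := by
  simp [auxF, Finset.sum_range_succ]

noncomputable def dlt (n : ℕ) : ℝ :=
  2 * auxF (n-1) + auxF n + auxF (n-2) - auxF (2*n-2)
  + 2*(n:ℝ)*((n:ℝ)-1)*Real.log 2 - (n:ℝ)*Real.log (2*(n:ℝ)) - (1/4)*Real.log (n:ℝ)

lemma dlt_succ (n : ℕ) (hn : 2 ≤ n) :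
    dlt (n+1) = dlt n + ((n:ℝ) * Real.log (2*(n:ℝ)) + ((n:ℝ)-1) * Real.log (2*(n:ℝ)-2)
      - (2*(n:ℝ)-1) * Real.log (2*(n:ℝ)-1)
      - (1/4) * (Real.log ((n:ℝ)+1) - Real.log (n:ℝ))) := by
  obtain ⟨m, rfl⟩ : ∃ m, n = m + 2 := ⟨n-2, by omega⟩
  have e1 : m + 2 + 1 - 1 = m + 1 + 1 := by omega
  have e2 : m + 2 + 1 - 2 = m + 1 := by omega
  have e3 : 2*(m+2+1) - 2 = (2*m+2) + 1 + 1 := by omega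
  have e4 : m + 2 - 1 = m + 1 := by omega
  have e5 : m + 2 - 2 = m := by omega
  have e6 : 2*(m+2) - 2 = 2*m+2 := by omega
  rw [dlt, dlt, e1, e2, e3, e4, e5, e6]
  rw [show m + 2 + 1 = (m+2)+1 from rfl, auxF_succ (m+2), auxF_succ (m+1), auxF_succ m,
    auxF_succ ((2*m+2)+1), auxF_succ (2*m+2)]
  push_cast
  ring_nf
  have hl1 : Real.log (4+(m:ℝ)*2) = Real.log 2 + Real.log (2+(m:ℝ)) := by
    rw [show (4+(m:ℝ)*2) = 2*(2+(m:ℝ)) by ring]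
    exact Real.log_mul two_ne_zero (by positivity)
  have hl2 : Real.log (6+(m:ℝ)*2) = Real.log 2 + Real.log (3+(m:ℝ)) := by
    rw [show (6+(m:ℝ)*2) = 2*(3+(m:ℝ)) by ring]
    exact Real.log_mul two_ne_zero (by positivity)
  have hl3 : Real.log (2+(m:ℝ)*2) = Real.log 2 + Real.log (1+(m:ℝ)) := by
    rw [show (2+(m:ℝ)*2) = 2*(1+(m:ℝ)) by ring]
    exact Real.log_mul two_ne_zero (by positivity)
  rw [hl1, hl2, hl3]
  ring

lemma step_ineq (x : ℝ) (hx : 5 ≤ x) :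
    x * Real.log (2*x) + (x-1) * Real.log (2*x-2) - (2*x-1) * Real.log (2*x-1)
      - (1/4) * (Real.log (x+1) - Real.log x)
    ≤ 1/(2*(2*x-1)) - 1/(2*(2*x+1))
      + (13/50) * (1/(4*x*(x-1)) - 1/(4*(x+1)*x)) := by
  have hx0 : (0:ℝ) < x := by linarith
  have hx1 : (0:ℝ) < x - 1 := by linarith
  have h2x : (0:ℝ) < 2*x := by linarith
  have h2x2 : (0:ℝ) < 2*x-2 := by linarith
  have ha : (9:ℝ) ≤ 2*x-1 := by linarith
  have ha0 : (0:ℝ) < 2*x-1 := by linarith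
  set a : ℝ := 2*x-1 with hadef
  have haa : (0:ℝ) < a^2 - 1 := by nlinarith
  have haa2 : (0:ℝ) < 2*a^2 - 1 := by nlinarith
  set τ : ℝ := (2*x-1)^2 / ((2*x)*(2*x-2)) with hτdef
  set σ : ℝ := (2*x) / (2*x-2) with hσdef
  have hτlog : Real.log τ = 2*Real.log (2*x-1) - Real.log (2*x) - Real.log (2*x-2) := by
    rw [hτdef, Real.log_div (by positivity) (by positivity),
      Real.log_mul (by positivity) (by positivity), Real.log_pow]
    push_cast; ring
  have hσlog : Real.log σ = Real.log (2*x) - Real.log (2*x-2) :=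
    Real.log_div (by positivity) (by positivity)
  have hρlog : Real.log (x+1) - Real.log x = Real.log ((x+1)/x) :=
    (Real.log_div (by positivity) (by positivity)).symm
  have hdecomp : x * Real.log (2*x) + (x-1) * Real.log (2*x-2) - (2*x-1) * Real.log (2*x-1)
      = -(a/2) * Real.log τ + (1/2) * Real.log σ := by
    rw [hτlog, hσlog, hadef]; ring
  -- bounds
  have hτ1 : (1:ℝ) ≤ τ := by
    rw [hτdef, le_div_iff₀ (by positivity)]; nlinarith
  have hb1 : 2/(2*a^2-1) ≤ Real.log τ := by
    have h := midpoint_le_log hτ1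
    have he1 : 2*(τ-1)/(τ+1) = 2/(2*a^2-1) := by
      rw [hτdef, hadef, div_eq_div_iff (by positivity) (by positivity)]
      field_simp; ring
    linarith [he1 ▸ h]
  have hσ1 : (1:ℝ) ≤ σ := by rw [hσdef, le_div_iff₀ (by positivity)]; linarith
  have hb2 : Real.log σ ≤ 2*a/(a^2-1) := by
    have h := log_le_trap hσ1
    have he2 : (σ - σ⁻¹)/2 = 2*a/(a^2-1) := by
      have : a^2-1 = (2*x)*(2*x-2) := by rw [hadef]; ring
      rw [hσdef, hadef] at *; rw [inv_div, this]; field_simp; ring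
    linarith [he2 ▸ h]
  have hb3 : 2/(2*x+1) ≤ Real.log ((x+1)/x) := by
    have hρ1 : (1:ℝ) ≤ (x+1)/x := by rw [le_div_iff₀ hx0]; linarith
    have h := midpoint_le_log hρ1
    have he3 : 2*((x+1)/x-1)/((x+1)/x+1) = 2/(2*x+1) := by
      rw [div_eq_div_iff (by positivity) (by positivity)]; field_simp; ring
    linarith [he3 ▸ h]
  -- combine
  have hcomb : x * Real.log (2*x) + (x-1) * Real.log (2*x-2) - (2*x-1) * Real.log (2*x-1)
      - (1/4) * (Real.log (x+1) - Real.log x)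
      ≤ -(a/(2*a^2-1)) + a/(a^2-1) - 1/(2*(2*x+1)) := by
    rw [hdecomp, hρlog]
    have t1 : -(a/2) * Real.log τ ≤ -(a/(2*a^2-1)) := by
      have h1 : (a/2) * (2/(2*a^2-1)) ≤ (a/2) * Real.log τ :=
        mul_le_mul_of_nonneg_left hb1 (by linarith)
      have h2 : (a/2) * (2/(2*a^2-1)) = a/(2*a^2-1) := by ring
      linarith
    have t2 : (1/2) * Real.log σ ≤ a/(a^2-1) := by
      have h2 : (1/2) * (2*a/(a^2-1)) = a/(a^2-1) := by ring
      linarith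
    have t3 : (1/4) * (2/(2*x+1)) ≤ (1/4) * Real.log ((x+1)/x) := by linarith
    have h3 : (1/4) * (2/(2*x+1)) = 1/(2*(2*x+1)) := by
      rw [eq_div_iff (by positivity)]; field_simp; ring
    linarith
  refine le_trans hcomb ?_
  -- pure rational inequality
  have hne1 : a ≠ 0 := ne_of_gt ha0
  have hne2 : a^2 - 1 ≠ 0 := ne_of_gt haa
  have hne3 : 2*a^2 - 1 ≠ 0 := ne_of_gt haa2
  have hne4 : a - 1 ≠ 0 := ne_of_gt (by linarith)
  have hne5 : a + 1 ≠ 0 := ne_of_gt (by linarith)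
  have hne6 : a + 3 ≠ 0 := ne_of_gt (by linarith)
  have key : -(a/(2*a^2-1)) + a/(a^2-1) - 1/(2*a) ≤ (26/25) / ((a-1)*(a+1)*(a+3)) := by
    rw [← sub_nonneg]
    have hd : (0:ℝ) < 50*a*(a^2-1)*(2*a^2-1)*(a+3) := by positivity
    have heq : (26/25) / ((a-1)*(a+1)*(a+3))
        - (-(a/(2*a^2-1)) + a/(a^2-1) - 1/(2*a))
        = (29*a^3 - 225*a^2 - 27*a + 75) / (50*a*(a^2-1)*(2*a^2-1)*(a+3)) := by
      generalize hb : 2*a^2-1 = b at hne3 ⊢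
      field_simp
      rw [← hb]
      ring
    rw [heq]
    apply div_nonneg _ hd.le
    nlinarith [sq_nonneg (a-9)]
  have hcast1 : 1/(4*x*(x-1)) = 1/(a^2-1) := by rw [hadef]; congr 1; ring
  have hcast2 : 1/(4*(x+1)*x) = 1/((a+1)*(a+3)) := by rw [hadef]; congr 1; ring
  have hne7 : (a+1)*(a+3) ≠ 0 := mul_ne_zero hne5 hne6
  have hcast3 : (13:ℝ)/50 * (1/(a^2-1) - 1/((a+1)*(a+3))) = (26/25)/((a-1)*(a+1)*(a+3)) := by
    field_simp
    ring
  have h2x1 : 1/(2*(2*x-1)) = 1/(2*a) := by rw [hadef]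
  rw [hcast1, hcast2, h2x1, hcast3]
  linarith

lemma l4e : Real.log 4 = 2*Real.log 2 := by
  rw [show (4:ℝ) = 2^2 by norm_num, Real.log_pow]; push_cast; ring
lemma l6e : Real.log 6 = Real.log 2 + Real.log 3 := by
  rw [show (6:ℝ) = 2*3 by norm_num, Real.log_mul (by norm_num) (by norm_num)]
lemma l8e : Real.log 8 = 3*Real.log 2 := by
  rw [show (8:ℝ) = 2^3 by norm_num, Real.log_pow]; push_cast; ring
lemma l10e : Real.log 10 = Real.log 2 + Real.log 5 := by
  rw [show (10:ℝ) = 2*5 by norm_num, Real.log_mul (by norm_num) (by norm_num)]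

lemma dlt_two : dlt 2 = -(1/4)*Real.log 2 := by
  show 2 * auxF 1 + auxF 2 + auxF 0 - auxF 2
      + 2*(2:ℕ)*((2:ℕ)-1)*Real.log 2 - (2:ℕ)*Real.log (2*(2:ℕ)) - (1/4)*Real.log (2:ℕ) = _
  simp only [auxF]
  norm_num [Finset.sum_range_succ, l4e]
  ring

lemma dlt_three : dlt 3 = 5*Real.log 2 - (13/4)*Real.log 3 := by
  show 2 * auxF 2 + auxF 3 + auxF 1 - auxF 4
      + 2*(3:ℕ)*((3:ℕ)-1)*Real.log 2 - (3:ℕ)*Real.log (2*(3:ℕ)) - (1/4)*Real.log (3:ℕ) = _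
  simp only [auxF]
  norm_num [Finset.sum_range_succ, l4e, l6e]
  ring

lemma dlt_four : dlt 4 = (23/2)*Real.log 2 - 5*Real.log 5 := by
  show 2 * auxF 3 + auxF 4 + auxF 2 - auxF 6
      + 2*(4:ℕ)*((4:ℕ)-1)*Real.log 2 - (4:ℕ)*Real.log (2*(4:ℕ)) - (1/4)*Real.log (4:ℕ) = _
  simp only [auxF]
  norm_num [Finset.sum_range_succ, l4e, l6e, l8e]
  ring

lemma dlt_five : dlt 5 = 27*Real.log 2 + 3*Real.log 3 - (21/4)*Real.log 5 - 7*Real.log 7 := by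
  show 2 * auxF 4 + auxF 5 + auxF 3 - auxF 8
      + 2*(5:ℕ)*((5:ℕ)-1)*Real.log 2 - (5:ℕ)*Real.log (2*(5:ℕ)) - (1/4)*Real.log (5:ℕ) = _
  simp only [auxF]
  norm_num [Finset.sum_range_succ, l4e, l6e, l8e, l10e]
  ring

lemma dlt_bound (n : ℕ) (hn : 5 ≤ n) :
    dlt n + (1/(2*(2*(n:ℝ)-1)) + (13/50)*(1/(4*(n:ℝ)*((n:ℝ)-1))))
      ≤ dlt 5 + 1/18 + 13/4000 := by
  induction n, hn using Nat.le_induction with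
  | base => norm_num; linarith
  | succ n hn ih =>
    have h5 : (5:ℝ) ≤ (n:ℝ) := by exact_mod_cast hn
    have hrec := dlt_succ n (by omega)
    have hstep := step_ineq (n:ℝ) h5
    push_cast
    rw [hrec]
    have e1 : 1/(2*(2*((n:ℝ)+1)-1)) = 1/(2*(2*(n:ℝ)+1)) := by ring_nf
    have e2 : 1/(4*((n:ℝ)+1)*((n:ℝ)+1-1)) = 1/(4*((n:ℝ)+1)*(n:ℝ)) := by ring_nf
    rw [e1, e2]
    linarith

lemma dlt_neg_of_ge (n : ℕ) (hn : 5 ≤ n) (hnum : dlt 5 + 1/18 + 13/4000 < 0) : dlt n < 0 := by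
  have h5 : (5:ℝ) ≤ (n:ℝ) := by exact_mod_cast hn
  have hb := dlt_bound n hn
  have h1 : (0:ℝ) < 1/(2*(2*(n:ℝ)-1)) := by
    apply div_pos one_pos; linarith
  have h2 : (0:ℝ) < (13/50)*(1/(4*(n:ℝ)*((n:ℝ)-1))) := by
    apply mul_pos (by norm_num)
    apply div_pos one_pos
    nlinarith
  linarith


lemma dlt_neg (n : ℕ) (hn : 2 ≤ n) : dlt n < 0 := by
  have l2a := Real.log_two_gt_d9
  have l2b := Real.log_two_lt_d9
  have l3 := log3_bounds
  have l5 := log5_bounds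
  have l7 := log7_bounds
  have hnum : dlt 5 + 1/18 + 13/4000 < 0 := by
    rw [dlt_five]
    norm_num at l2a l2b ⊢
    linarith [l3.1, l3.2, l5.1, l5.2, l7.1, l7.2]
  rcases lt_or_ge n 5 with h | h
  · interval_cases n
    · rw [dlt_two]; norm_num at l2a ⊢; linarith
    · rw [dlt_three]; norm_num at l2b ⊢; linarith [l3.1]
    · rw [dlt_four]; norm_num at l2b ⊢; linarith [l5.1]
  · exact dlt_neg_of_ge n h hnum

-- sum identities
lemma sumA (s : ℕ) (hs : 2 ≤ s) :
    ∑ j ∈ Finset.Icc 1 s, ((2*(j-1) : ℕ) : ℝ) * Real.log ((j:ℝ)-1) = 2 * auxF (s-1) := by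
  rw [← Finset.Ico_add_one_right_eq_Icc, Finset.sum_Ico_eq_sum_range]
  rw [show s + 1 - 1 = s from rfl]
  rw [auxF, show s - 1 + 1 = s by omega, Finset.mul_sum]
  apply Finset.sum_congr rfl
  intro i _
  rw [show 1+i-1 = i by omega]
  push_cast
  ring

lemma sumB (s : ℕ) (hs : 2 ≤ s) :
    ∑ j ∈ Finset.Icc 1 s, (j : ℝ) * Real.log (j:ℝ) = auxF s := by
  rw [auxF]
  apply Finset.sum_subset
  · intro x hx
    simp only [Finset.mem_Icc, Finset.mem_range] at *
    omega
  · intro x hx1 hx2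
    simp only [Finset.mem_Icc, Finset.mem_range] at *
    have : x = 0 := by omega
    simp [this]

lemma sumC (s : ℕ) (hs : 2 ≤ s) :
    ∑ j ∈ Finset.Icc 1 s, ((s+j-2 : ℕ) : ℝ) * Real.log ((s+j-2 : ℕ) : ℝ)
      = auxF (2*s-2) - auxF (s-2) := by
  rw [← Finset.Ico_add_one_right_eq_Icc, Finset.sum_Ico_eq_sum_range]
  rw [show s + 1 - 1 = s from rfl]
  have h1 : ∀ i ∈ Finset.range s, ((s+(1+i)-2 : ℕ) : ℝ) * Real.log ((s+(1+i)-2 : ℕ) : ℝ)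
      = (((s-1)+i : ℕ) : ℝ) * Real.log (((s-1)+i : ℕ) : ℝ) := by
    intro i _
    rw [show s+(1+i)-2 = s-1+i by omega]
  rw [Finset.sum_congr rfl h1]
  have h2 : ∑ i ∈ Finset.range s, (((s-1)+i : ℕ) : ℝ) * Real.log (((s-1)+i : ℕ) : ℝ)
      = ∑ m ∈ Finset.Ico (s-1) (2*s-1), (m : ℝ) * Real.log (m : ℝ) := by
    rw [Finset.sum_Ico_eq_sum_range]
    have e : 2*s-1-(s-1) = s := by omega
    rw [e]
  rw [h2]
  have h3 : auxF (s-2) + ∑ m ∈ Finset.Ico (s-1) (2*s-1), (m : ℝ) * Real.log (m : ℝ)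
      = auxF (2*s-2) := by
    rw [auxF, auxF, show s-2+1 = s-1 by omega, show 2*s-2+1 = 2*s-1 by omega,
      Finset.range_eq_Ico, Finset.range_eq_Ico]
    exact Finset.sum_Ico_consecutive (fun k : ℕ => (k:ℝ) * Real.log k) (m := 0) (n := s-1) (k := 2*s-1) (by omega) (by omega)
  linarith

theorem letendreC_lt (s : ℕ) (hs : 2 ≤ s) :
    letendreC s <
      (1 / 4) * Real.exp ((s * Real.log (2 * s) + (1 / 4) * Real.log s) / (s * (s - 1))) := by
  have hs2 : (2:ℝ) ≤ (s:ℝ) := by exact_mod_cast hs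
  have hM : (0:ℝ) < (s:ℝ) * ((s:ℝ)-1) := by nlinarith
  -- positivity of factors
  have hbpos : ∀ j ∈ Finset.Icc 1 s,
      (0:ℝ) < ((j:ℝ)-1)^(2*(j-1)) * (j:ℝ)^j / ((s:ℝ)+(j:ℝ)-2)^(s+j-2) := by
    intro j hj
    rw [Finset.mem_Icc] at hj
    have hj1 : 1 ≤ j := hj.1
    have hjr : (1:ℝ) ≤ (j:ℝ) := by exact_mod_cast hj1
    have hden : (0:ℝ) < ((s:ℝ)+(j:ℝ)-2)^(s+j-2) := by
      apply pow_pos; linarith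
    have hnum : (0:ℝ) < ((j:ℝ)-1)^(2*(j-1)) * (j:ℝ)^j := by
      rcases eq_or_lt_of_le hj1 with h | h
      · rw [← h]; norm_num
      · have h2 : (2:ℕ) ≤ j := h
        have : (2:ℝ) ≤ (j:ℝ) := by exact_mod_cast h2
        have : (0:ℝ) < (j:ℝ)-1 := by linarith
        positivity
    exact div_pos hnum hden
  -- log of each factor
  have hlogb : ∀ j ∈ Finset.Icc 1 s,
      Real.log (((j:ℝ)-1)^(2*(j-1)) * (j:ℝ)^j / ((s:ℝ)+(j:ℝ)-2)^(s+j-2))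
      = ((2*(j-1) : ℕ) : ℝ) * Real.log ((j:ℝ)-1) + (j:ℝ) * Real.log (j:ℝ)
        - ((s+j-2 : ℕ) : ℝ) * Real.log ((s+j-2 : ℕ) : ℝ) := by
    intro j hj
    rw [Finset.mem_Icc] at hj
    have hj1 : 1 ≤ j := hj.1
    have hjr : (1:ℝ) ≤ (j:ℝ) := by exact_mod_cast hj1
    have hcast : ((s+j-2 : ℕ) : ℝ) = (s:ℝ)+(j:ℝ)-2 := by
      have h2 : 2 ≤ s + j := by omega
      rw [Nat.cast_sub h2]; push_cast; ring
    have h1 : ((j:ℝ)-1)^(2*(j-1)) ≠ 0 := by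
      rcases eq_or_lt_of_le hj1 with h | h
      · rw [← h]; norm_num
      · have h2 : (2:ℕ) ≤ j := h
        have : (2:ℝ) ≤ (j:ℝ) := by exact_mod_cast h2
        apply pow_ne_zero; intro hc; linarith [hc]
    have h2 : (j:ℝ)^j ≠ 0 := by positivity
    have h3 : ((s:ℝ)+(j:ℝ)-2)^(s+j-2) ≠ 0 := by
      apply pow_ne_zero; intro hc; linarith [hc]
    rw [Real.log_div (mul_ne_zero h1 h2) h3, Real.log_mul h1 h2,
      Real.log_pow, Real.log_pow, Real.log_pow, hcast]
  -- letendreC as exponential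
  set S : ℝ := ∑ j ∈ Finset.Icc 1 s,
    Real.log (((j:ℝ)-1)^(2*(j-1)) * (j:ℝ)^j / ((s:ℝ)+(j:ℝ)-2)^(s+j-2)) with hSdef
  have hprod : letendreC s = Real.exp (S / ((s:ℝ) * ((s:ℝ)-1))) := by
    rw [letendreC]
    have : ∀ j ∈ Finset.Icc 1 s,
        (((j - 1 : ℝ) ^ (2 * (j - 1)) * (j : ℝ) ^ j / ((s : ℝ) + j - 2) ^ (s + j - 2))
          ^ ((1 : ℝ) / (s * (s - 1))))
        = Real.exp (Real.log (((j:ℝ)-1)^(2*(j-1)) * (j:ℝ)^j / ((s:ℝ)+(j:ℝ)-2)^(s+j-2))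
            * ((1:ℝ) / ((s:ℝ) * ((s:ℝ)-1)))) := by
      intro j hj
      rw [Real.rpow_def_of_pos (hbpos j hj)]
    rw [Finset.prod_congr rfl this, ← Real.exp_sum, ← Finset.sum_mul, mul_one_div]
  rw [hprod]
  have h14 : (1/4:ℝ) * Real.exp (((s:ℝ) * Real.log (2 * (s:ℝ)) + (1 / 4) * Real.log (s:ℝ))
      / ((s:ℝ) * ((s:ℝ) - 1)))
      = Real.exp (Real.log (1/4) + ((s:ℝ) * Real.log (2 * (s:ℝ)) + (1 / 4) * Real.log (s:ℝ))
      / ((s:ℝ) * ((s:ℝ) - 1))) := by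
    rw [Real.exp_add, Real.exp_log (by norm_num)]
  rw [h14, Real.exp_lt_exp]
  -- reduce to dlt s < 0
  have hlog14 : Real.log (1/4) = -(2*Real.log 2) := by
    rw [show (1/4:ℝ) = 4⁻¹ by norm_num, Real.log_inv, l4e]
  set T : ℝ := (s:ℝ) * Real.log (2 * (s:ℝ)) + (1 / 4) * Real.log (s:ℝ) with hTdef
  rw [div_lt_iff₀ hM]
  have hexpand : (Real.log (1/4) + T/((s:ℝ)*((s:ℝ)-1)))*((s:ℝ)*((s:ℝ)-1))
      = Real.log (1/4)*((s:ℝ)*((s:ℝ)-1)) + T := by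
    rw [add_mul, div_mul_cancel₀ _ hM.ne']
  rw [hexpand, hlog14]
  have hSval : S = 2*auxF (s-1) + auxF s + auxF (s-2) - auxF (2*s-2) := by
    rw [hSdef, Finset.sum_congr rfl hlogb]
    have hsplit : ∑ j ∈ Finset.Icc 1 s,
        (((2*(j-1) : ℕ) : ℝ) * Real.log ((j:ℝ)-1) + (j:ℝ) * Real.log (j:ℝ)
          - ((s+j-2 : ℕ) : ℝ) * Real.log ((s+j-2 : ℕ) : ℝ))
        = (∑ j ∈ Finset.Icc 1 s, ((2*(j-1) : ℕ) : ℝ) * Real.log ((j:ℝ)-1))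
          + (∑ j ∈ Finset.Icc 1 s, (j:ℝ) * Real.log (j:ℝ))
          - ∑ j ∈ Finset.Icc 1 s, ((s+j-2 : ℕ) : ℝ) * Real.log ((s+j-2 : ℕ) : ℝ) := by
      rw [← Finset.sum_add_distrib, ← Finset.sum_sub_distrib]
    rw [hsplit, sumA s hs, sumB s hs, sumC s hs]
    ring
  have hdlt := dlt_neg s hs
  rw [dlt] at hdlt
  rw [hTdef, hSval]
  push_cast
  nlinarith [hdlt]
end

section
/- Let P(x) = a_n x^n + ⋯ + a_1 x + a_0 ∈ ℤ[x] have degree n ≥ 1 and let q ≥ 2 satisfy gcd(a_n, …, a_0, q) = 1. Let x_1 < x_2 < ⋯ < x_s be integers with P(x_i) ≡ 0 (mod q) for all i, and set Δ := ∏_{1 ≤ i < j ≤ s} (x_j − x_i). If s ≥ n + 1, then for every prime p, (s²/(2n) − s/2) · v_p(q) ≤ v_p(Δ), where v_p denotes the p-adic valuation. -/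
open Polynomial Finset

section helpers
lemma comp_C_mul_X_coeff' {R : Type*} [CommSemiring R] (q : R[X]) (c : R) (m : ℕ) :
    (q.comp (C c * X)).coeff m = q.coeff m * c ^ m := by
  induction q using Polynomial.induction_on' with
  | add f g hf hg => simp [add_comp, hf, hg, add_mul]
  | monomial e a =>
      rw [monomial_comp, mul_pow, ← C_pow, ← mul_assoc, ← C_mul, coeff_C_mul, coeff_X_pow,
        coeff_monomial]
      by_cases h : e = m
      · simp [h]
      · rw [if_neg fun h' => h h'.symm, mul_zero, if_neg h, zero_mul]

lemma shift_coeff (f : ℤ[X]) (r' c : ℤ) (m : ℕ) :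
    (f.comp (C r' + C c * X)).coeff m = (taylor r' f).coeff m * c ^ m := by
  rw [show (C r' + C c * X : ℤ[X]) = (X + C r').comp (C c * X) by
        rw [add_comp, X_comp, C_comp, add_comm],
    ← comp_assoc, ← taylor_apply, comp_C_mul_X_coeff']

lemma shift_eval (f : ℤ[X]) (r' c y : ℤ) :
    (f.comp (C r' + C c * X)).eval y = f.eval (r' + c * y) := by
  simp [eval_comp]
end helpers

theorem class_bound {p : ℕ} (hp : p.Prime) (E : ℕ) (hE : 1 ≤ E)
    (IH : ∀ E' : ℕ, E' < E → ∀ f : Polynomial ℤ, f.map (Int.castRingHom (ZMod p)) ≠ 0 →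
      ∀ d : ℕ, 1 ≤ d → (f.map (Int.castRingHom (ZMod p))).natDegree ≤ d →
      ∀ T : Finset ℤ, (∀ z ∈ T, (p : ℤ) ^ E' ∣ f.eval z) →
      (E' : ℝ) * ((T.card : ℝ) ^ 2 / d - T.card) ≤
        ∑ pr ∈ T.offDiag, (padicValInt p (pr.1 - pr.2) : ℝ))
    (f : Polynomial ℤ) (hf : f.map (Int.castRingHom (ZMod p)) ≠ 0)
    (r' : ℤ) (T : Finset ℤ) (hT : T.Nonempty)
    (hTr : ∀ z ∈ T, (z : ZMod p) = (r' : ZMod p))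
    (hroots : ∀ z ∈ T, (p : ℤ) ^ E ∣ f.eval z) :
    ∃ μ : ℕ, 1 ≤ μ ∧
      μ ≤ (f.map (Int.castRingHom (ZMod p))).rootMultiplicity (r' : ZMod p) ∧
      (E : ℝ) * ((T.card : ℝ) ^ 2 / μ - T.card) ≤
        ∑ pr ∈ T.offDiag, (padicValInt p (pr.1 - pr.2) : ℝ) := by
  classical
  haveI : Fact p.Prime := ⟨hp⟩
  set φ := Int.castRingHom (ZMod p) with hφ
  have hp0 : (p : ℤ) ≠ 0 := Int.natCast_ne_zero.mpr hp.ne_zero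
  set g : ℤ[X] := f.comp (C r' + C (p : ℤ) * X) with hgdef
  have hgcoeff : ∀ m, g.coeff m = (taylor r' f).coeff m * (p : ℤ) ^ m :=
    fun m => shift_coeff f r' p m
  have hgeval : ∀ y : ℤ, g.eval y = f.eval (r' + p * y) := fun y => shift_eval f r' p y
  have hf0 : f ≠ 0 := fun h => hf (by simp [h])
  -- evaluation transfer
  have hev : ∀ z : ℤ, ((f.eval z : ℤ) : ZMod p) = (f.map φ).eval ((z : ℤ) : ZMod p) := by
    intro z
    rw [eval_map, hφ]
    rw [show ((z : ℤ) : ZMod p) = (Int.castRingHom (ZMod p)) z from rfl, eval₂_at_apply]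
    rfl
  -- g ≠ 0
  have ht0 : taylor r' f ≠ 0 := fun h' => hf0 (taylor_injective r' (by simp [h']))
  have hg0 : g ≠ 0 := by
    intro h
    have h1 : (taylor r' f).coeff f.natDegree * (p : ℤ) ^ f.natDegree = 0 := by
      rw [← hgcoeff, h, coeff_zero]
    have h2 : (taylor r' f).coeff f.natDegree ≠ 0 := by
      have hnd : (taylor r' f).natDegree = f.natDegree := natDegree_taylor f r'
      rw [← hnd]
      exact leadingCoeff_ne_zero.mpr ht0
    exact h2 (by
      rcases mul_eq_zero.mp h1 with h' | h'
      · exact h'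
      · exact absurd h' (pow_ne_zero _ hp0))
  have hcont0 : g.content ≠ 0 := fun h => hg0 (content_eq_zero_iff.mp h)
  have hna0 : g.content.natAbs ≠ 0 := fun h => hcont0 (Int.natAbs_eq_zero.mp h)
  set μ : ℕ := (g.content.natAbs).factorization p with hμdef
  -- p divides all coefficients of g
  obtain ⟨x0, hx0⟩ := hT
  have hevr' : ((f.eval r' : ℤ) : ZMod p) = 0 := by
    rw [hev r', ← hTr x0 hx0, ← hev x0, ZMod.intCast_zmod_eq_zero_iff_dvd]
    exact dvd_trans (dvd_pow_self (p : ℤ) (by omega)) (hroots x0 hx0)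
  have hpr' : (p : ℤ) ∣ f.eval r' := (ZMod.intCast_zmod_eq_zero_iff_dvd _ p).mp hevr'
  have hdvd_coeff : ∀ m, (p : ℤ) ∣ g.coeff m := by
    intro m
    match m with
    | 0 => rw [hgcoeff, taylor_coeff_zero, pow_zero, mul_one]; exact hpr'
    | Nat.succ m =>
        rw [hgcoeff]
        exact dvd_mul_of_dvd_right (dvd_pow_self _ (Nat.succ_ne_zero m)) _
  have hpcont : (p : ℤ) ∣ g.content :=
    dvd_content_iff_C_dvd.mpr ((C_dvd_iff_dvd_coeff _ _).mpr hdvd_coeff)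
  have hμ1 : 1 ≤ μ := by
    have h1 : p ∣ g.content.natAbs := by
      simpa using Int.natAbs_dvd_natAbs.mpr hpcont
    exact hp.factorization_pos_of_dvd hna0 h1
  -- p^μ divides g
  have hpowC : C ((p : ℤ) ^ μ) ∣ g := by
    apply dvd_content_iff_C_dvd.mp
    have h1 : (p : ℕ) ^ μ ∣ g.content.natAbs := Nat.ordProj_dvd _ p
    have h2 := Int.natCast_dvd_natCast.mpr h1
    rw [Int.dvd_natAbs] at h2
    push_cast at h2
    exact h2
  obtain ⟨Q, hQ⟩ := hpowC
  have hQcoeff : ∀ m, g.coeff m = (p : ℤ) ^ μ * Q.coeff m := by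
    intro m; rw [hQ, coeff_C_mul]
  have hnotdvd : ¬ (p ^ (μ + 1) ∣ g.content.natAbs) :=
    Nat.pow_succ_factorization_not_dvd hna0 hp
  -- Q mod p nonzero
  have hQbar : Q.map φ ≠ 0 := by
    intro h
    apply hnotdvd
    have hQc : ∀ m, (p : ℤ) ∣ Q.coeff m := by
      intro m
      rw [← ZMod.intCast_zmod_eq_zero_iff_dvd]
      have : (Q.map φ).coeff m = 0 := by rw [h, coeff_zero]
      rwa [coeff_map] at this
    have hgc : ∀ m, (p : ℤ) ^ (μ + 1) ∣ g.coeff m := by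
      intro m
      rw [hQcoeff m, pow_succ]
      exact mul_dvd_mul dvd_rfl (hQc m)
    have h1 : (p : ℤ) ^ (μ + 1) ∣ g.content :=
      dvd_content_iff_C_dvd.mpr ((C_dvd_iff_dvd_coeff _ _).mpr hgc)
    have h2 := Int.natAbs_dvd_natAbs.mpr h1
    simpa [Int.natAbs_pow] using h2
  -- degree of Q mod p is at most μ
  have hQdeg : (Q.map φ).natDegree ≤ μ := by
    apply natDegree_le_iff_coeff_eq_zero.mpr
    intro N hN
    rw [coeff_map]
    show ((Q.coeff N : ℤ) : ZMod p) = 0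
    rw [ZMod.intCast_zmod_eq_zero_iff_dvd]
    have hpow : (p : ℤ) ^ N = (p : ℤ) ^ μ * (p : ℤ) ^ (N - μ) := by
      rw [← pow_add]; congr 1; omega
    have hc : (p : ℤ) ^ μ * Q.coeff N =
        (p : ℤ) ^ μ * ((taylor r' f).coeff N * (p : ℤ) ^ (N - μ)) := by
      rw [← hQcoeff, hgcoeff, hpow]; ring
    rw [mul_left_cancel₀ (pow_ne_zero μ hp0) hc]
    exact dvd_mul_of_dvd_right (dvd_pow_self _ (by omega)) _
  -- μ is at most the root multiplicity
  set rb : ZMod p := ((r' : ℤ) : ZMod p) with hrb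
  set a : ℕ := (f.map φ).rootMultiplicity rb with hadef
  obtain ⟨k, hk, hknd⟩ :=
    exists_eq_pow_rootMultiplicity_mul_and_not_dvd (f.map φ) hf rb
  have htaylor_map : (taylor r' f).map φ = taylor rb (f.map φ) := by
    rw [taylor_apply, taylor_apply, map_comp]
    simp only [Polynomial.map_add, map_X, map_C]
    rw [hrb]
    norm_cast
  have hXsub : ∀ j : ℕ, taylor rb ((X - C rb) ^ j) = X ^ j := by
    intro j
    induction j with
    | zero => simp
    | succ j ihj =>
        rw [pow_succ, taylor_mul, ihj, pow_succ]
        congr 1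
        rw [map_sub, taylor_X, taylor_C]
        ring
  have hca : (((taylor r' f).coeff a : ℤ) : ZMod p) ≠ 0 := by
    have h1 : ((taylor r' f).map φ).coeff a = k.eval rb := by
      rw [htaylor_map, hk, taylor_mul, hXsub]
      have := coeff_X_pow_mul (taylor rb k) a 0
      rw [zero_add] at this
      rw [this, taylor_coeff_zero]
    have h2 : k.eval rb ≠ 0 := fun h => hknd (dvd_iff_isRoot.mpr h)
    have h3 : (((taylor r' f).coeff a : ℤ) : ZMod p) = k.eval rb := by
      rw [← h1, coeff_map]
      rfl
    rw [h3]
    exact h2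
  have hμa : μ ≤ a := by
    by_contra hcon
    push_neg at hcon
    have h1 : (p : ℤ) ^ a * (p : ℤ) ∣ g.coeff a := by
      rw [← pow_succ]
      calc (p : ℤ) ^ (a + 1) ∣ (p : ℤ) ^ μ := pow_dvd_pow _ (by omega)
        _ ∣ g.content := by
            have h1 : (p : ℕ) ^ μ ∣ g.content.natAbs := Nat.ordProj_dvd _ p
            have h2 := Int.natCast_dvd_natCast.mpr h1
            rw [Int.dvd_natAbs] at h2
            push_cast at h2
            exact h2
        _ ∣ g.coeff a := content_dvd_coeff a
    rw [hgcoeff a] at h1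
    have h2 : (p : ℤ) ^ a * (p : ℤ) ∣ (p : ℤ) ^ a * (taylor r' f).coeff a := by
      rwa [mul_comm ((taylor r' f).coeff a)] at h1
    have h3 : (p : ℤ) ∣ (taylor r' f).coeff a :=
      (mul_dvd_mul_iff_left (pow_ne_zero a hp0)).mp h2
    exact hca ((ZMod.intCast_zmod_eq_zero_iff_dvd _ p).mpr h3)
  -- the shifted set
  set ψ : ℤ → ℤ := fun z => (z - r') / p with hψ
  have hdvdsub : ∀ z ∈ T, (p : ℤ) ∣ (z - r') := by
    intro z hz
    rw [← ZMod.intCast_zmod_eq_zero_iff_dvd]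
    push_cast
    rw [hTr z hz, hrb, sub_self]
  have hrec : ∀ z ∈ T, r' + p * ψ z = z := by
    intro z hz
    rw [hψ]
    simp only []
    rw [Int.mul_ediv_cancel' (hdvdsub z hz)]
    ring
  have hinj : Set.InjOn ψ T := by
    intro a ha b hb hab
    have h1 := hrec a ha
    have h2 := hrec b hb
    have h3 : r' + p * ψ a = r' + p * ψ b := by rw [hab]
    rw [h1, h2] at h3
    exact h3
  set T' := T.image ψ with hT'
  have hcardT' : T'.card = T.card := Finset.card_image_of_injOn hinj
  have hc1 : 1 ≤ T.card := Finset.card_pos.mpr ⟨x0, hx0⟩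
  have hgQ : ∀ z ∈ T, (p : ℤ) ^ μ * Q.eval (ψ z) = f.eval z := by
    intro z hz
    have h1 : g.eval (ψ z) = f.eval z := by rw [hgeval, hrec z hz]
    rw [← h1, hQ]
    simp
  -- sum transformation
  have hpairne : ∀ pr : ℤ × ℤ, pr ∈ T.offDiag → pr.1 - pr.2 ≠ 0 := fun pr hpr =>
    sub_ne_zero.mpr (Finset.mem_offDiag.mp hpr).2.2
  have hsubψ : ∀ pr : ℤ × ℤ, pr ∈ T.offDiag → pr.1 - pr.2 = (ψ pr.1 - ψ pr.2) * p := by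
    intro pr hpr
    obtain ⟨h1, h2, -⟩ := Finset.mem_offDiag.mp hpr
    have e1 := hrec pr.1 h1
    have e2 := hrec pr.2 h2
    calc pr.1 - pr.2 = (r' + p * ψ pr.1) - (r' + p * ψ pr.2) := by rw [e1, e2]
      _ = (ψ pr.1 - ψ pr.2) * p := by ring
  have hψne : ∀ pr : ℤ × ℤ, pr ∈ T.offDiag → ψ pr.1 - ψ pr.2 ≠ 0 := by
    intro pr hpr h
    apply hpairne pr hpr
    rw [hsubψ pr hpr, h, zero_mul]
  have hval : ∀ pr : ℤ × ℤ, pr ∈ T.offDiag →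
      (padicValInt p (pr.1 - pr.2) : ℝ) = (padicValInt p (ψ pr.1 - ψ pr.2) : ℝ) + 1 := by
    intro pr hpr
    rw [hsubψ pr hpr, padicValInt_mul_eq_succ _ (hψne pr hpr)]
    push_cast
    ring
  have hsum1 : ∑ pr ∈ T.offDiag, (padicValInt p (pr.1 - pr.2) : ℝ)
      = (∑ pr ∈ T.offDiag, (padicValInt p (ψ pr.1 - ψ pr.2) : ℝ))
        + ((T.card : ℝ) ^ 2 - T.card) := by
    rw [Finset.sum_congr rfl hval, Finset.sum_add_distrib]
    congr 1
    rw [Finset.sum_const, nsmul_eq_mul, mul_one, Finset.offDiag_card]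
    have hle : T.card ≤ T.card * T.card := Nat.le_mul_of_pos_left _ (by omega)
    rw [Nat.cast_sub hle]
    push_cast
    ring
  have hsum2 : ∑ pr ∈ T.offDiag, (padicValInt p (ψ pr.1 - ψ pr.2) : ℝ)
      = ∑ pr ∈ T'.offDiag, (padicValInt p (pr.1 - pr.2) : ℝ) := by
    apply Finset.sum_nbij (fun pr => (ψ pr.1, ψ pr.2))
    · intro pr hpr
      obtain ⟨h1, h2, h3⟩ := Finset.mem_offDiag.mp hpr
      exact Finset.mem_offDiag.mpr ⟨Finset.mem_image_of_mem ψ h1, Finset.mem_image_of_mem ψ h2,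
        fun h => h3 (hinj h1 h2 h)⟩
    · intro pr1 h1 pr2 h2 h
      rw [Finset.mem_coe] at h1 h2
      obtain ⟨h11, h12, -⟩ := Finset.mem_offDiag.mp h1
      obtain ⟨h21, h22, -⟩ := Finset.mem_offDiag.mp h2
      have hh := Prod.ext_iff.mp h
      exact Prod.ext (hinj h11 h21 hh.1) (hinj h12 h22 hh.2)
    · intro pr hpr
      rw [Finset.mem_coe] at hpr
      obtain ⟨h1, h2, h3⟩ := Finset.mem_offDiag.mp hpr
      obtain ⟨z1, hz1, hz1'⟩ := Finset.mem_image.mp h1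
      obtain ⟨z2, hz2, hz2'⟩ := Finset.mem_image.mp h2
      refine ⟨(z1, z2), ?_, ?_⟩
      · exact Finset.mem_coe.mpr (Finset.mem_offDiag.mpr
          ⟨hz1, hz2, fun h => h3 (by rw [← hz1', ← hz2']; exact congrArg ψ h)⟩)
      · show (ψ z1, ψ z2) = pr
        rw [Prod.ext_iff]
        exact ⟨hz1', hz2'⟩
    · intro pr hpr
      rfl
  refine ⟨μ, hμ1, hμa, ?_⟩
  rw [hsum1, hsum2]
  have hμpos : (0 : ℝ) < (μ : ℝ) := by exact_mod_cast hμ1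
  have hμR : (1 : ℝ) ≤ (μ : ℝ) := by exact_mod_cast hμ1
  have hc0 : (0 : ℝ) ≤ (T.card : ℝ) := Nat.cast_nonneg _
  have hc1R : (1 : ℝ) ≤ (T.card : ℝ) := by exact_mod_cast hc1
  have hfield : (μ : ℝ) * ((T.card : ℝ) ^ 2 / μ) = (T.card : ℝ) ^ 2 := by
    exact mul_div_cancel₀ _ (ne_of_gt hμpos)
  by_cases hcase : μ < E
  · have hQroots : ∀ y ∈ T', (p : ℤ) ^ (E - μ) ∣ Q.eval y := by
      intro y hy
      obtain ⟨z, hz, rfl⟩ := Finset.mem_image.mp hy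
      have h1 : (p : ℤ) ^ μ * (p : ℤ) ^ (E - μ) ∣ (p : ℤ) ^ μ * Q.eval (ψ z) := by
        rw [← pow_add, hgQ z hz, show μ + (E - μ) = E by omega]
        exact hroots z hz
      exact (mul_dvd_mul_iff_left (pow_ne_zero μ hp0)).mp h1
    have hIH := IH (E - μ) (by omega) Q hQbar μ hμ1 hQdeg T' hQroots
    rw [hcardT'] at hIH
    have hcast : ((E - μ : ℕ) : ℝ) = (E : ℝ) - μ := by
      rw [Nat.cast_sub (by omega : μ ≤ E)]
    rw [hcast] at hIH
    nlinarith [hIH, hfield, mul_le_mul_of_nonneg_right hμR hc0]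
  · push_neg at hcase
    have hEμ : (E : ℝ) ≤ (μ : ℝ) := by exact_mod_cast hcase
    have hE1 : (1 : ℝ) ≤ (E : ℝ) := by exact_mod_cast hE
    have hS0 : (0 : ℝ) ≤ ∑ pr ∈ T'.offDiag, (padicValInt p (pr.1 - pr.2) : ℝ) :=
      Finset.sum_nonneg fun pr _ => Nat.cast_nonneg _
    have hdiv0 : (0 : ℝ) ≤ (T.card : ℝ) ^ 2 / μ := by exact div_nonneg (sq_nonneg _) hμpos.le
    nlinarith [mul_le_mul_of_nonneg_right hEμ hdiv0, hfield,
      mul_le_mul_of_nonneg_right hE1 hc0]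

lemma eval_cast (p : ℕ) (f : Polynomial ℤ) (z : ℤ) :
    ((f.eval z : ℤ) : ZMod p) = (f.map (Int.castRingHom (ZMod p))).eval ((z : ℤ) : ZMod p) := by
  rw [Polynomial.eval_map,
    show ((z : ℤ) : ZMod p) = (Int.castRingHom (ZMod p)) z from rfl, Polynomial.eval₂_at_apply]
  rfl

theorem key_bound {p : ℕ} (hp : p.Prime) :
    ∀ E : ℕ, ∀ f : Polynomial ℤ, f.map (Int.castRingHom (ZMod p)) ≠ 0 →
    ∀ d : ℕ, 1 ≤ d → (f.map (Int.castRingHom (ZMod p))).natDegree ≤ d →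
    ∀ T : Finset ℤ, (∀ z ∈ T, (p : ℤ) ^ E ∣ f.eval z) →
    (E : ℝ) * ((T.card : ℝ) ^ 2 / d - T.card) ≤
      ∑ pr ∈ T.offDiag, (padicValInt p (pr.1 - pr.2) : ℝ) := by
  intro E
  induction E using Nat.strong_induction_on with
  | _ E IH =>
    intro f hf d hd hdeg T hroots
    rcases Nat.eq_zero_or_pos E with hE0 | hE1
    · subst hE0
      simp only [Nat.cast_zero, zero_mul]
      exact Finset.sum_nonneg fun pr _ => Nat.cast_nonneg _
    haveI : Fact p.Prime := ⟨hp⟩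
    haveI : NeZero p := ⟨hp.ne_zero⟩
    classical
    set φ := Int.castRingHom (ZMod p) with hφ
    set R : Finset (ZMod p) := T.image (fun z : ℤ => (z : ZMod p)) with hR
    set Tr : ZMod p → Finset ℤ := fun r => T.filter (fun z => (z : ZMod p) = r) with hTrdef
    have hcls : ∀ r : ZMod p, ∃ μ : ℕ, 1 ≤ μ ∧ (r ∈ R →
        μ ≤ (f.map φ).rootMultiplicity r ∧
        (E : ℝ) * (((Tr r).card : ℝ) ^ 2 / μ - (Tr r).card) ≤
          ∑ pr ∈ (Tr r).offDiag, (padicValInt p (pr.1 - pr.2) : ℝ)) := by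
      intro r
      by_cases hr : r ∈ R
      · obtain ⟨z0, hz0, hz0'⟩ := Finset.mem_image.mp hr
        have hne : (Tr r).Nonempty := ⟨z0, Finset.mem_filter.mpr ⟨hz0, hz0'⟩⟩
        have hmem : ∀ z ∈ Tr r, (z : ZMod p) = ((z0 : ℤ) : ZMod p) := by
          intro z hz
          rw [(Finset.mem_filter.mp hz).2, ← hz0']
        obtain ⟨μ, h1, h2, h3⟩ := class_bound hp E hE1 IH f hf z0 (Tr r) hne hmem
          (fun z hz => hroots z (Finset.mem_filter.mp hz).1)
        rw [hz0'] at h2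
        exact ⟨μ, h1, fun _ => ⟨h2, h3⟩⟩
      · exact ⟨1, le_refl 1, fun h => absurd h hr⟩
    choose μf hμ1 hμ2 using hcls
    have hmapsto : ∀ z ∈ T, (z : ZMod p) ∈ R := fun z hz => Finset.mem_image_of_mem _ hz
    have hcard : ∑ r ∈ R, (Tr r).card = T.card :=
      (Finset.card_eq_sum_card_fiberwise hmapsto).symm
    have hroot_mem : ∀ r ∈ R, r ∈ (f.map φ).roots.toFinset := by
      intro r hr
      obtain ⟨z0, hz0, hz0'⟩ := Finset.mem_image.mp hr
      rw [Multiset.mem_toFinset, Polynomial.mem_roots hf]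
      have h1 : ((f.eval z0 : ℤ) : ZMod p) = 0 := (ZMod.intCast_zmod_eq_zero_iff_dvd _ p).mpr
        (dvd_trans (dvd_pow_self _ (by omega)) (hroots z0 hz0))
      rw [eval_cast p f z0] at h1
      rw [← hz0']
      exact h1
    have hμd : ∑ r ∈ R, μf r ≤ d :=
      calc ∑ r ∈ R, μf r ≤ ∑ r ∈ R, (f.map φ).roots.count r := Finset.sum_le_sum (fun r hr => by
            rw [Polynomial.count_roots]; exact (hμ2 r hr).1)
        _ ≤ ∑ r ∈ (f.map φ).roots.toFinset, (f.map φ).roots.count r :=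
            Finset.sum_le_sum_of_subset hroot_mem
        _ = Multiset.card (f.map φ).roots := Multiset.toFinset_sum_count_eq _
        _ ≤ (f.map φ).natDegree := Polynomial.card_roots' _
        _ ≤ d := hdeg
    -- sum decomposition
    set S := T.offDiag.filter
      (fun pr : ℤ × ℤ => ((pr.1 : ℤ) : ZMod p) = ((pr.2 : ℤ) : ZMod p)) with hS
    have hfib : ∀ r ∈ R, S.filter (fun pr : ℤ × ℤ => ((pr.1 : ℤ) : ZMod p) = r)
        = (Tr r).offDiag := by
      intro r _
      ext pr
      simp only [hS, Finset.mem_filter, Finset.mem_offDiag, hTrdef]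
      constructor
      · rintro ⟨⟨⟨h1, h2, h3⟩, h4⟩, h5⟩
        exact ⟨⟨h1, h5⟩, ⟨h2, by rw [← h4, h5]⟩, h3⟩
      · rintro ⟨⟨h1, h5⟩, ⟨h2, h6⟩, h3⟩
        exact ⟨⟨⟨h1, h2, h3⟩, by rw [h5, h6]⟩, h5⟩
    have hmapsS : ∀ pr ∈ S, ((pr.1 : ℤ) : ZMod p) ∈ R := fun pr hpr =>
      hmapsto pr.1 (Finset.mem_offDiag.mp (Finset.mem_filter.mp hpr).1).1
    have hdecomp : ∑ r ∈ R, ∑ pr ∈ (Tr r).offDiag, (padicValInt p (pr.1 - pr.2) : ℝ)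
        = ∑ pr ∈ S, (padicValInt p (pr.1 - pr.2) : ℝ) := by
      rw [← Finset.sum_fiberwise_of_maps_to hmapsS
        (fun pr : ℤ × ℤ => (padicValInt p (pr.1 - pr.2) : ℝ))]
      exact Finset.sum_congr rfl fun r hr => by rw [hfib r hr]
    have hSle : ∑ pr ∈ S, (padicValInt p (pr.1 - pr.2) : ℝ)
        ≤ ∑ pr ∈ T.offDiag, (padicValInt p (pr.1 - pr.2) : ℝ) :=
      Finset.sum_le_sum_of_subset_of_nonneg (Finset.filter_subset _ _)
        (fun _ _ _ => Nat.cast_nonneg _)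
    -- Cauchy–Schwarz
    have hd0 : (0 : ℝ) < (d : ℝ) := by exact_mod_cast hd
    have hCS : (T.card : ℝ) ^ 2 ≤ (d : ℝ) * ∑ r ∈ R, ((Tr r).card : ℝ) ^ 2 / μf r := by
      have h := Finset.sum_mul_sq_le_sq_mul_sq R (fun r => Real.sqrt (μf r))
        (fun r => ((Tr r).card : ℝ) / Real.sqrt (μf r))
      have hμpos : ∀ r : ZMod p, (0 : ℝ) < (μf r : ℝ) := fun r => by exact_mod_cast hμ1 r
      have hsqrt : ∀ r : ZMod p, Real.sqrt (μf r) ≠ 0 := fun r =>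
        ne_of_gt (Real.sqrt_pos.mpr (hμpos r))
      have h1 : ∀ r : ZMod p,
          Real.sqrt (μf r) * (((Tr r).card : ℝ) / Real.sqrt (μf r)) = ((Tr r).card : ℝ) :=
        fun r => mul_div_cancel₀ _ (hsqrt r)
      have h2 : ∀ r : ZMod p, (Real.sqrt (μf r)) ^ 2 = (μf r : ℝ) :=
        fun r => Real.sq_sqrt (Nat.cast_nonneg _)
      have h3 : ∀ r : ZMod p,
          (((Tr r).card : ℝ) / Real.sqrt (μf r)) ^ 2 = ((Tr r).card : ℝ) ^ 2 / μf r :=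
        fun r => by rw [div_pow, h2]
      simp only [h1, h2, h3] at h
      have hc : (∑ r ∈ R, (((Tr r).card : ℕ) : ℝ)) = (T.card : ℝ) := by
        rw [← Nat.cast_sum, hcard]
      rw [hc] at h
      have hμsum : (∑ r ∈ R, (μf r : ℝ)) ≤ (d : ℝ) := by
        rw [← Nat.cast_sum]
        exact_mod_cast hμd
      have hpos : (0 : ℝ) ≤ ∑ r ∈ R, ((Tr r).card : ℝ) ^ 2 / μf r :=
        Finset.sum_nonneg fun r _ => div_nonneg (sq_nonneg _) (le_of_lt (hμpos r))
      calc (T.card : ℝ) ^ 2 ≤ (∑ r ∈ R, (μf r : ℝ)) * ∑ r ∈ R, ((Tr r).card : ℝ) ^ 2 / μf r := h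
        _ ≤ (d : ℝ) * ∑ r ∈ R, ((Tr r).card : ℝ) ^ 2 / μf r :=
            mul_le_mul_of_nonneg_right hμsum hpos
    -- combine
    have hE0R : (0 : ℝ) ≤ (E : ℝ) := Nat.cast_nonneg _
    calc (E : ℝ) * ((T.card : ℝ) ^ 2 / d - T.card)
        ≤ (E : ℝ) * ((∑ r ∈ R, ((Tr r).card : ℝ) ^ 2 / μf r) - T.card) := by
          apply mul_le_mul_of_nonneg_left _ hE0R
          apply sub_le_sub_right
          rw [div_le_iff₀ hd0]
          linarith [hCS]
      _ = ∑ r ∈ R, (E : ℝ) * (((Tr r).card : ℝ) ^ 2 / μf r - (Tr r).card) := by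
          rw [← hcard, Nat.cast_sum, ← Finset.sum_sub_distrib, Finset.mul_sum]
      _ ≤ ∑ r ∈ R, ∑ pr ∈ (Tr r).offDiag, (padicValInt p (pr.1 - pr.2) : ℝ) :=
          Finset.sum_le_sum fun r hr => (hμ2 r hr).2
      _ = ∑ pr ∈ S, (padicValInt p (pr.1 - pr.2) : ℝ) := hdecomp
      _ ≤ ∑ pr ∈ T.offDiag, (padicValInt p (pr.1 - pr.2) : ℝ) := hSle

lemma padicValInt_prod' {p : ℕ} [Fact p.Prime] {ι : Type*} (s : Finset ι) (f : ι → ℤ)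
    (h : ∀ i ∈ s, f i ≠ 0) :
    padicValInt p (∏ i ∈ s, f i) = ∑ i ∈ s, padicValInt p (f i) := by
  classical
  induction s using Finset.cons_induction with
  | empty => simp
  | cons a s ha IH =>
      rw [Finset.prod_cons, Finset.sum_cons,
        padicValInt.mul (h a (Finset.mem_cons_self a s))
          (Finset.prod_ne_zero_iff.mpr fun i hi => h i (Finset.mem_cons_of_mem hi)),
        IH fun i hi => h i (Finset.mem_cons_of_mem hi)]

lemma padicValInt_sub_comm' (p : ℕ) (a b : ℤ) :
    padicValInt p (a - b) = padicValInt p (b - a) := by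
  unfold padicValInt
  rw [← Int.natAbs_neg, neg_sub]

theorem valuation_divisibility_of_roots
    (P : Polynomial ℤ) (n : ℕ) (hn : 1 ≤ n) (hdeg : P.natDegree = n)
    (q : ℕ) (hq : 2 ≤ q) (hcont : Int.gcd P.content q = 1)
    (s : ℕ) (hs : n + 1 ≤ s) (x : Fin s → ℤ) (hmono : StrictMono x)
    (hroot : ∀ i, (q : ℤ) ∣ P.eval (x i)) (p : ℕ) (hp : p.Prime) :
    ((s : ℝ) ^ 2 / (2 * n) - s / 2) * (q.factorization p) ≤
      padicValInt p (∏ pr ∈ Finset.univ.filter (fun pr : Fin s × Fin s => pr.1 < pr.2),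
        (x pr.2 - x pr.1)) := by
  classical
  haveI : Fact p.Prime := ⟨hp⟩
  set Dlt := Finset.univ.filter (fun pr : Fin s × Fin s => pr.1 < pr.2) with hDlt
  have hne : ∀ pr ∈ Dlt, x pr.2 - x pr.1 ≠ 0 := by
    intro pr hpr
    exact sub_ne_zero.mpr (ne_of_gt (hmono (Finset.mem_filter.mp hpr).2))
  have hprod : (padicValInt p (∏ pr ∈ Dlt, (x pr.2 - x pr.1)) : ℝ)
      = ∑ pr ∈ Dlt, (padicValInt p (x pr.2 - x pr.1) : ℝ) := by
    rw [padicValInt_prod' _ _ hne]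
    push_cast
    rfl
  rw [hprod]
  set V := ∑ pr ∈ Dlt, (padicValInt p (x pr.2 - x pr.1) : ℝ) with hV
  rcases Nat.eq_zero_or_pos (q.factorization p) with h0 | hpos
  · rw [h0]
    simp only [Nat.cast_zero, mul_zero]
    exact Finset.sum_nonneg fun pr _ => Nat.cast_nonneg _
  · have hpq : p ∣ q := by
      by_contra h
      rw [Nat.factorization_eq_zero_of_not_dvd h] at hpos
      omega
    have hfbar : P.map (Int.castRingHom (ZMod p)) ≠ 0 := by
      intro h
      have hc : (p : ℤ) ∣ P.content := Polynomial.dvd_content_iff_C_dvd.mpr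
        ((Polynomial.C_dvd_iff_dvd_coeff _ _).mpr (fun m => by
          rw [← ZMod.intCast_zmod_eq_zero_iff_dvd]
          have : (P.map (Int.castRingHom (ZMod p))).coeff m = 0 := by
            rw [h, Polynomial.coeff_zero]
          rwa [Polynomial.coeff_map] at this))
      have hpg : (p : ℤ) ∣ (Int.gcd P.content q : ℤ) :=
        Int.dvd_coe_gcd hc (Int.natCast_dvd_natCast.mpr hpq)
      rw [hcont] at hpg
      have h2 := Int.le_of_dvd one_pos hpg
      have h3 := hp.two_le
      push_cast at h2
      omega
    set T := Finset.image x Finset.univ with hT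
    have hTcard : T.card = s := by
      rw [Finset.card_image_of_injective _ hmono.injective, Finset.card_univ, Fintype.card_fin]
    have hTroots : ∀ z ∈ T, (p : ℤ) ^ (q.factorization p) ∣ P.eval z := by
      intro z hz
      obtain ⟨i, -, rfl⟩ := Finset.mem_image.mp hz
      have h1 : ((p ^ (q.factorization p) : ℕ) : ℤ) ∣ (q : ℤ) :=
        Int.natCast_dvd_natCast.mpr (Nat.ordProj_dvd q p)
      push_cast at h1
      exact h1.trans (hroot i)
    have hkey := key_bound hp (q.factorization p) P hfbar n hn
      (le_trans Polynomial.natDegree_map_le (le_of_eq hdeg)) T hTroots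
    rw [hTcard] at hkey
    -- relate the two sums
    set Dne := Finset.univ.filter (fun pr : Fin s × Fin s => pr.1 ≠ pr.2) with hDne
    have hstep1 : ∑ pr ∈ T.offDiag, (padicValInt p (pr.1 - pr.2) : ℝ)
        = ∑ pr ∈ Dne, (padicValInt p (x pr.1 - x pr.2) : ℝ) := by
      symm
      apply Finset.sum_nbij (fun pr : Fin s × Fin s => (x pr.1, x pr.2))
      · intro pr hpr
        have h1 := (Finset.mem_filter.mp hpr).2
        exact Finset.mem_offDiag.mpr ⟨Finset.mem_image_of_mem _ (Finset.mem_univ _),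
          Finset.mem_image_of_mem _ (Finset.mem_univ _),
          fun h => h1 (hmono.injective h)⟩
      · intro pr1 _ pr2 _ h
        have hh := Prod.ext_iff.mp h
        exact Prod.ext (hmono.injective hh.1) (hmono.injective hh.2)
      · intro pr hpr
        rw [Finset.mem_coe] at hpr
        obtain ⟨h1, h2, h3⟩ := Finset.mem_offDiag.mp hpr
        obtain ⟨i, -, hi⟩ := Finset.mem_image.mp h1
        obtain ⟨j, -, hj⟩ := Finset.mem_image.mp h2
        refine ⟨(i, j), ?_, ?_⟩
        · refine Finset.mem_coe.mpr (Finset.mem_filter.mpr ⟨Finset.mem_univ _, fun h => ?_⟩)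
          exact h3 (by rw [← hi, ← hj]; exact congrArg x h)
        · show (x i, x j) = pr
          rw [Prod.ext_iff]
          exact ⟨hi, hj⟩
      · intro pr hpr
        rfl
    have hstep2 : ∑ pr ∈ Dne, (padicValInt p (x pr.1 - x pr.2) : ℝ) = 2 * V := by
      rw [← Finset.sum_filter_add_sum_filter_not Dne (fun pr => pr.1 < pr.2)]
      have he1 : Dne.filter (fun pr => pr.1 < pr.2) = Dlt := by
        ext pr
        simp only [hDne, hDlt, Finset.mem_filter, Finset.mem_univ, true_and]
        exact ⟨fun h => h.2, fun h => ⟨ne_of_lt h, h⟩⟩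
      have he2 : Dne.filter (fun pr => ¬ pr.1 < pr.2)
          = Finset.univ.filter (fun pr : Fin s × Fin s => pr.2 < pr.1) := by
        ext pr
        simp only [hDne, Finset.mem_filter, Finset.mem_univ, true_and]
        constructor
        · rintro ⟨h1, h2⟩
          exact lt_of_le_of_ne (not_lt.mp h2) (Ne.symm h1)
        · intro h
          exact ⟨ne_of_gt h, not_lt.mpr (le_of_lt h)⟩
      rw [he1, he2]
      have he3 : ∑ pr ∈ Finset.univ.filter (fun pr : Fin s × Fin s => pr.2 < pr.1),
          (padicValInt p (x pr.1 - x pr.2) : ℝ)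
          = ∑ pr ∈ Dlt, (padicValInt p (x pr.2 - x pr.1) : ℝ) := by
        apply Finset.sum_nbij (fun pr : Fin s × Fin s => (pr.2, pr.1))
        · intro pr hpr
          exact Finset.mem_filter.mpr ⟨Finset.mem_univ _, (Finset.mem_filter.mp hpr).2⟩
        · intro pr1 _ pr2 _ h
          have hh := Prod.ext_iff.mp h
          exact Prod.ext hh.2 hh.1
        · intro pr hpr
          rw [Finset.mem_coe] at hpr
          refine ⟨(pr.2, pr.1), ?_, rfl⟩
          exact Finset.mem_coe.mpr
            (Finset.mem_filter.mpr ⟨Finset.mem_univ _, (Finset.mem_filter.mp hpr).2⟩)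
        · intro pr hpr
          rfl
      have he4 : ∑ pr ∈ Dlt, (padicValInt p (x pr.1 - x pr.2) : ℝ)
          = ∑ pr ∈ Dlt, (padicValInt p (x pr.2 - x pr.1) : ℝ) :=
        Finset.sum_congr rfl fun pr _ => by rw [padicValInt_sub_comm']
      rw [he3, he4, hV]
      ring
    rw [hstep1, hstep2] at hkey
    have hn0 : (0 : ℝ) < (n : ℝ) := by exact_mod_cast hn
    have heq : (s : ℝ) ^ 2 / (2 * n) - (s : ℝ) / 2 = ((s : ℝ) ^ 2 / n - s) / 2 := by
      field_simp
    rw [heq]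
    have hE0 : (0 : ℝ) ≤ (q.factorization p : ℝ) := Nat.cast_nonneg _
    nlinarith [hkey]
end

section
/- Let Ω ⊂ ℝ^m be a closed parallelepiped of nonzero m-dimensional volume, and define t(Ω) as the supremum over all (m+1)-tuples v_1, …, v_{m+1} ∈ Ω of the absolute value of the determinant of the (m+1)×(m+1) matrix whose first row is all 1's and whose remaining rows have columns v_1, …, v_{m+1}. Then t(Ω) ≤ ((m+2)^{(m+1)/2} / 2^m) · Vol(Ω). -/
open MeasureTheory

open Finset in
lemma hadamard_ineq {n : ℕ} (A : Matrix (Fin n) (Fin n) ℝ) :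
    |A.det| ≤ ∏ i, Real.sqrt (∑ j, (A i j)^2) := by
  haveI : Fact (Module.finrank ℝ (EuclideanSpace ℝ (Fin n)) = n) :=
    ⟨finrank_euclideanSpace_fin⟩
  set f : Fin n → EuclideanSpace ℝ (Fin n) := fun i => WithLp.toLp 2 (A i : Fin n → ℝ) with hf
  set b := EuclideanSpace.basisFun (Fin n) ℝ with hb
  set o := b.toBasis.orientation with ho
  have h1 : b.toBasis.det f = A.det := by
    rw [Module.Basis.det_apply]
    have : b.toBasis.toMatrix f = Matrix.transpose A := by
      ext i j
      rfl
    rw [this, Matrix.det_transpose]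
  have h2 : o.volumeForm = b.toBasis.det := Orientation.volumeForm_robust o b rfl
  calc |A.det| = |o.volumeForm f| := by rw [h2, h1]
    _ ≤ ∏ i, ‖f i‖ := o.abs_volumeForm_apply_le f
    _ = ∏ i, Real.sqrt (∑ j, (A i j)^2) := by
        refine Finset.prod_congr rfl fun i _ => ?_
        rw [EuclideanSpace.norm_eq]
        congr 1
        exact Finset.sum_congr rfl fun j _ => by simp [f, sq_abs]

lemma cube_det_bound (m : ℕ) (t : Fin (m+1) → Fin m → ℝ)
    (ht0 : ∀ j k, 0 ≤ t j k) (ht1 : ∀ j k, t j k ≤ 1) :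
    |(Matrix.of (Fin.cons (fun _ => (1:ℝ)) (fun k j => t j k))).det| ≤
      ((m:ℝ)+2) ^ (((m:ℝ)+1)/2) / 2^m := by
  set N : Matrix (Fin (m+1)) (Fin (m+1)) ℝ :=
    Matrix.of (Fin.cons (fun _ => (1:ℝ)) (fun k j => t j k)) with hN
  set N' : Matrix (Fin (m+1)) (Fin (m+1)) ℝ :=
    Matrix.of (Fin.cons (fun _ => (1:ℝ)) (fun k j => 2 * t j k - 1)) with hN'
  set B : Matrix (Fin (m+1)) (Fin (m+1)) ℝ :=
    Matrix.of (fun i j =>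
      if i = j then (if i = 0 then (1:ℝ) else 2) else if j = 0 then -1 else 0) with hB
  have hBN : B * N = N' := by
    ext i j
    rw [Matrix.mul_apply, Fin.sum_univ_succ]
    refine Fin.cases ?_ (fun k => ?_) i
    · simp [B, N, N', Fin.succ_ne_zero, fun k : Fin m => (Fin.succ_ne_zero k).symm]
    · have : ∀ l : Fin m, B k.succ l.succ * N l.succ j
          = if k = l then 2 * t j l else 0 := by
        intro l
        simp only [B, N, Matrix.of_apply, Fin.cons_succ, Fin.succ_inj,
          Fin.succ_ne_zero, if_false]
        split <;> ring
      rw [Finset.sum_congr rfl (fun l _ => this l)]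
      simp only [Finset.sum_ite_eq, Finset.mem_univ, if_true]
      simp only [B, N, N', Matrix.of_apply, Fin.cons_zero, Fin.cons_succ,
        Fin.succ_ne_zero, if_false, if_true]
      ring
  have hBtri : B.BlockTriangular OrderDual.toDual := by
    intro i j hij
    have hij' : i < j := hij
    have h1 : i ≠ j := ne_of_lt hij'
    have h2 : j ≠ 0 := by
      intro h
      exact (Fin.not_lt_zero i) (h ▸ hij')
    simp [B, h1, h2]
  have hdetB : B.det = 2^m := by
    rw [Matrix.det_of_lowerTriangular B hBtri]
    rw [Fin.prod_univ_succ]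
    simp [B, fun k : Fin m => (Fin.succ_ne_zero k)]
  have hdetN' : |N'.det| ≤ ((m:ℝ)+2) ^ (((m:ℝ)+1)/2) := by
    have h1 : |N'.det| ≤ ∏ i, Real.sqrt (∑ j, (N' i j)^2) := hadamard_ineq N'
    have h2 : ∀ i : Fin (m+1), Real.sqrt (∑ j, (N' i j)^2) ≤ Real.sqrt ((m:ℝ)+2) := by
      intro i
      apply Real.sqrt_le_sqrt
      have : ∀ j : Fin (m+1), (N' i j)^2 ≤ 1 := by
        intro j
        refine Fin.cases ?_ (fun k => ?_) i
        · simp [N']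
        · have h0 : N' k.succ j = 2 * t j k - 1 := rfl
          rw [h0, sq_le_one_iff_abs_le_one, abs_le]
          constructor <;> nlinarith [ht0 j k, ht1 j k]
      calc ∑ j, (N' i j)^2 ≤ ∑ _j : Fin (m+1), (1:ℝ) :=
            Finset.sum_le_sum (fun j _ => this j)
        _ = (m:ℝ) + 1 := by simp
        _ ≤ (m:ℝ) + 2 := by linarith
    calc |N'.det| ≤ ∏ i, Real.sqrt (∑ j, (N' i j)^2) := h1
      _ ≤ ∏ _i : Fin (m+1), Real.sqrt ((m:ℝ)+2) :=
          Finset.prod_le_prod (fun i _ => Real.sqrt_nonneg _) (fun i _ => h2 i)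
      _ = Real.sqrt ((m:ℝ)+2) ^ (m+1) := by rw [Finset.prod_const, Finset.card_univ,
            Fintype.card_fin]
      _ = ((m:ℝ)+2) ^ (((m:ℝ)+1)/2) := by
          have hm2 : (0:ℝ) ≤ (m:ℝ)+2 := by positivity
          rw [Real.sqrt_eq_rpow, ← Real.rpow_natCast (((m:ℝ)+2) ^ ((1:ℝ)/2)) (m+1),
            ← Real.rpow_mul hm2]
          norm_num
          ring_nf
  have key : (2:ℝ)^m * |N.det| = |N'.det| := by
    rw [← hBN, Matrix.det_mul, abs_mul, hdetB, abs_of_nonneg (by positivity : (0:ℝ) ≤ (2:ℝ)^m)]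
  have h2m : (0:ℝ) < 2^m := by positivity
  rw [le_div_iff₀ h2m]
  nlinarith [key, hdetN', abs_nonneg N.det]

/-- `D(v₁,…,v_{m+1})`: absolute value of the determinant of the matrix with a
first row of 1's and the points as the remaining rows' columns. -/
noncomputable def letendreD (m : ℕ) (v : Fin (m + 1) → (Fin m → ℝ)) : ℝ :=
  |(Matrix.of (Fin.cons (fun _ => (1 : ℝ)) (fun i j => v j i))).det|

/-- `t(Ω)`: supremum of `D` over tuples of points of `Ω`. -/
noncomputable def letendreT (m : ℕ) (Ω : Set (Fin m → ℝ)) : ℝ :=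
  sSup {y : ℝ | ∃ v : Fin (m + 1) → (Fin m → ℝ), (∀ i, v i ∈ Ω) ∧ y = letendreD m v}

theorem t_parallelepiped_le (m : ℕ) (hm : 1 ≤ m)
    (a : Fin m → ℝ) (w : Fin m → (Fin m → ℝ))
    (Ω : Set (Fin m → ℝ)) (hΩ : Ω = (fun x => a + x) '' parallelepiped w)
    (hvol : volume Ω ≠ 0) :
    letendreT m Ω ≤ ((m : ℝ) + 2) ^ (((m : ℝ) + 1) / 2) / 2 ^ m * (volume Ω).toReal := by
  set C : ℝ := ((m:ℝ)+2) ^ (((m:ℝ)+1)/2) / 2^m with hCdef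
  have hC0 : 0 ≤ C := by positivity
  have hbvol : (Pi.basisFun ℝ (Fin m)).addHaar = volume := by
    rw [Module.Basis.addHaar_def, Module.Basis.parallelepiped_basisFun, addHaarMeasure_eq_volume_pi]
  have hdetw : (Pi.basisFun ℝ (Fin m)).det w = (Matrix.of w).det := by
    rw [Module.Basis.det_apply]
    have h : (Pi.basisFun ℝ (Fin m)).toMatrix w = Matrix.transpose (Matrix.of w) := by
      ext i j
      simp [Module.Basis.toMatrix_apply, Matrix.transpose_apply]
    rw [h, Matrix.det_transpose]
  have hvol' : volume Ω = ENNReal.ofReal |(Matrix.of w).det| := by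
    rw [hΩ, Set.image_add_left, measure_preimage_add, ← hbvol,
      Measure.addHaar_parallelepiped, hdetw]
  have htoReal : (volume Ω).toReal = |(Matrix.of w).det| := by
    rw [hvol', ENNReal.toReal_ofReal (abs_nonneg _)]
  apply Real.sSup_le
  · rintro y ⟨v, hv, rfl⟩
    have hv' : ∀ j, ∃ t : Fin m → ℝ, t ∈ Set.Icc (0 : Fin m → ℝ) 1 ∧
        v j = a + ∑ k, t k • w k := by
      intro j
      have hj := hv j
      rw [hΩ] at hj
      obtain ⟨x, hx, hxv⟩ := hj
      rw [mem_parallelepiped_iff] at hx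
      obtain ⟨t, ht, rfl⟩ := hx
      exact ⟨t, ht, hxv.symm⟩
    choose t ht htv using hv'
    have ht0 : ∀ j k, 0 ≤ t j k := fun j k => (ht j).1 k
    have ht1 : ∀ j k, t j k ≤ 1 := fun j k => (ht j).2 k
    set M : Matrix (Fin (m+1)) (Fin (m+1)) ℝ :=
      Matrix.of (Fin.cons (fun _ => (1:ℝ)) (fun i j => v j i)) with hM
    set A : Matrix (Fin (m+1)) (Fin (m+1)) ℝ :=
      Matrix.of (Fin.cons (fun j => if j = (0 : Fin (m+1)) then (1:ℝ) else 0)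
        (fun i => Fin.cons (a i) (fun k => w k i))) with hA
    set N : Matrix (Fin (m+1)) (Fin (m+1)) ℝ :=
      Matrix.of (Fin.cons (fun _ => (1:ℝ)) (fun k j => t j k)) with hNdef
    have hMAN : M = A * N := by
      ext i j
      rw [Matrix.mul_apply, Fin.sum_univ_succ]
      refine Fin.cases ?_ (fun i0 => ?_) i
      · simp [A, N, M, Fin.succ_ne_zero]
      · have hvj : v j i0 = a i0 + ∑ k, t j k * w k i0 := by
          rw [htv j]
          simp [Finset.sum_apply]
        simp only [M, A, N, Matrix.of_apply, Fin.cons_succ, Fin.cons_zero]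
        rw [hvj, mul_one]
        congr 1
        exact Finset.sum_congr rfl fun k _ => mul_comm _ _
    have hsub : A.submatrix Fin.succ Fin.succ = Matrix.transpose (Matrix.of w) := by
      ext i k
      simp [A, Matrix.transpose_apply]
    have hdetA : A.det = (Matrix.of w).det := by
      rw [Matrix.det_succ_row_zero, Fin.sum_univ_succ]
      simp only [A, Matrix.of_apply, Fin.cons_zero, Fin.cons_succ, Fin.succ_ne_zero,
        if_false, if_true, Fin.val_zero, pow_zero, one_mul, mul_zero, zero_mul,
        Finset.sum_const_zero, add_zero, Fin.succAbove_zero]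
      rw [hsub, Matrix.det_transpose]
    have hDN : |N.det| ≤ C := cube_det_bound m t ht0 ht1
    have : letendreD m v = |A.det| * |N.det| := by
      rw [letendreD, ← hM, hMAN, Matrix.det_mul, abs_mul]
    rw [this, hdetA, htoReal, mul_comm C _]
    exact mul_le_mul_of_nonneg_left hDN (abs_nonneg _)
  · exact mul_nonneg hC0 ENNReal.toReal_nonneg
end

section
/- Define D(v_1,…,v_{m+1}) := |det [[1,…,1],[v_1,…,v_{m+1}]]| for points v_i ∈ ℝ^m, and t(Ω) := sup over v_1,…,v_{m+1} ∈ Ω of D(v_1,…,v_{m+1}). For Ω the unit cube [0,1]^m: t([0,1]^1) = 1, t([0,1]^2) = 1, t([0,1]^3) = 2, and t([0,1]^4) = 3. -/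
open Matrix

private def consMat {R : Type*} [CommRing R] (m : ℕ) (N : Matrix (Fin m) (Fin (m + 1)) R) :
    Matrix (Fin (m + 1)) (Fin (m + 1)) R :=
  Matrix.of (Fin.cons (fun _ => (1 : R)) N)

private lemma consMat_zero {R : Type*} [CommRing R] (m : ℕ) (N : Matrix (Fin m) (Fin (m + 1)) R)
    (b : Fin (m + 1)) : consMat m N 0 b = 1 := rfl

private lemma consMat_succ {R : Type*} [CommRing R] (m : ℕ) (N : Matrix (Fin m) (Fin (m + 1)) R)
    (a : Fin m) (b : Fin (m + 1)) : consMat m N a.succ b = N a b := rfl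

private lemma hadamard_pm (n : ℕ) (hn : 0 < n) (A : Matrix (Fin n) (Fin n) ℝ)
    (h : ∀ i j, A i j = 1 ∨ A i j = -1) :
    A.det ^ 2 ≤ (n : ℝ) ^ n := by
  have hG : (A * Aᴴ).PosSemidef := posSemidef_self_mul_conjTranspose A
  have hH : (A * Aᴴ).IsHermitian := hG.1
  set μ : Fin n → ℝ := hH.eigenvalues with hμ
  have hμ0 : ∀ i, 0 ≤ μ i := hG.eigenvalues_nonneg
  have hdet : (A * Aᴴ).det = ∏ i, μ i := by
    rw [hH.det_eq_prod_eigenvalues]; rfl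
  have htr : (A * Aᴴ).trace = ∑ i, μ i := by
    conv_lhs => rw [hH.spectral_theorem]
    rw [Unitary.conjStarAlgAut_apply, Matrix.trace_mul_cycle, Unitary.coe_star_mul_self, Matrix.one_mul,
      Matrix.trace_diagonal]
    norm_num
    rfl
  have hdiag : ∀ i, (A * Aᴴ) i i = (n : ℝ) := by
    intro i
    rw [Matrix.mul_apply]
    have : ∀ j, A i j * Aᴴ j i = 1 := by
      intro j
      rw [Matrix.conjTranspose_apply, star_trivial]
      rcases h i j with h' | h' <;> rw [h'] <;> ring
    rw [Finset.sum_congr rfl (fun j _ => this j)]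
    simp
  have htr' : (A * Aᴴ).trace = (n : ℝ) * n := by
    rw [Matrix.trace]
    unfold Matrix.diag
    rw [Finset.sum_congr rfl (fun i _ => hdiag i)]
    simp [Finset.card_univ, mul_comm]
  have hsum : ∑ i, μ i = (n : ℝ) * n := by rw [← htr, htr']
  have hAM := Real.geom_mean_le_arith_mean_weighted Finset.univ
    (fun _ => (n : ℝ)⁻¹) μ (fun i _ => by positivity)
    (by simp [Finset.card_univ]; field_simp) (fun i _ => hμ0 i)
  have hP : ∏ i, μ i ^ ((n : ℝ)⁻¹) ≤ (n : ℝ) := by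
    calc ∏ i, μ i ^ ((n : ℝ)⁻¹) ≤ ∑ i, (n : ℝ)⁻¹ * μ i := hAM
    _ = (n:ℝ)⁻¹ * ∑ i, μ i := by rw [Finset.mul_sum]
    _ = (n : ℝ) := by rw [hsum]; field_simp
  have hPn : (∏ i, μ i ^ ((n : ℝ)⁻¹)) ^ n ≤ (n : ℝ) ^ n := by
    apply pow_le_pow_left₀ (Finset.prod_nonneg fun i _ => Real.rpow_nonneg (hμ0 i) _) hP
  have hPeq : (∏ i, μ i ^ ((n : ℝ)⁻¹)) ^ n = ∏ i, μ i := by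
    rw [← Finset.prod_pow]
    apply Finset.prod_congr rfl
    intro i _
    rw [← Real.rpow_natCast (μ i ^ ((n:ℝ)⁻¹)) n, ← Real.rpow_mul (hμ0 i)]
    rw [inv_mul_cancel₀ (by positivity : (n:ℝ) ≠ 0), Real.rpow_one]
  have hfin : A.det ^ 2 = ∏ i, μ i := by
    rw [← hdet]
    have : Aᴴ = Aᵀ := by
      ext i j; simp [Matrix.conjTranspose_apply, star_trivial]
    rw [this, Matrix.det_mul, Matrix.det_transpose]; ring
  rw [hfin, ← hPeq]
  exact hPn

private lemma consMat_updateRow {R : Type*} [CommRing R] (m : ℕ)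
    (N : Matrix (Fin m) (Fin (m + 1)) R) (i : Fin m) (r : Fin (m + 1) → R) :
    consMat m (N.updateRow i r) = (consMat m N).updateRow i.succ r := by
  ext a b
  refine Fin.cases ?_ ?_ a
  · rw [Matrix.updateRow_ne (Fin.succ_ne_zero i).symm]
    rfl
  · intro a'
    by_cases hc : a' = i
    · subst hc
      show (N.updateRow a' r) a' b = _
      rw [Matrix.updateRow_self, Matrix.updateRow_self]
    · have hc' : a'.succ ≠ i.succ := fun hcc => hc (Fin.succ_injective _ hcc)
      rw [Matrix.updateRow_ne hc']
      show (N.updateRow i r) a' b = _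
      rw [Matrix.updateRow_ne hc]
      rfl

private lemma consMat_det_affine (m : ℕ) (N : Matrix (Fin m) (Fin (m + 1)) ℝ)
    (i : Fin m) (j : Fin (m + 1)) (x : ℝ) :
    (consMat m (N.updateRow i (Function.update (N i) j x))).det
      = (1 - x) * (consMat m (N.updateRow i (Function.update (N i) j 0))).det
        + x * (consMat m (N.updateRow i (Function.update (N i) j 1))).det := by
  have key : ∀ t : ℝ, (consMat m (N.updateRow i (Function.update (N i) j t))).det
      = (consMat m (N.updateRow i (Function.update (N i) j 0))).det
        + t * ((consMat m N).updateRow i.succ (Pi.single j 1)).det := by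
    intro t
    have h1 : Function.update (N i) j t
        = Function.update (N i) j 0 + t • (Pi.single j 1 : Fin (m + 1) → ℝ) := by
      funext k
      by_cases hk : k = j
      · subst hk; simp
      · simp [Function.update_of_ne hk, Pi.single_eq_of_ne hk]
    rw [consMat_updateRow, consMat_updateRow, h1, Matrix.det_updateRow_add,
      Matrix.det_updateRow_smul]
  rw [key x, key 0, key 1]; ring

private lemma round_step (m : ℕ) (c : ℝ)
    (h01 : ∀ N : Matrix (Fin m) (Fin (m + 1)) ℝ, (∀ i j, N i j = 0 ∨ N i j = 1) →
      |(consMat m N).det| ≤ c) :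
    ∀ (l : List (Fin m × Fin (m + 1))) (N : Matrix (Fin m) (Fin (m + 1)) ℝ),
      (∀ i j, N i j ∈ Set.Icc (0 : ℝ) 1) →
      (∀ p : Fin m × Fin (m + 1), p ∉ l → N p.1 p.2 = 0 ∨ N p.1 p.2 = 1) →
      |(consMat m N).det| ≤ c := by
  intro l
  induction l with
  | nil => exact fun N _ h => h01 N fun i j => h (i, j) List.not_mem_nil
  | cons p l ih =>
    rintro N hIcc h
    obtain ⟨i, j⟩ := p
    obtain ⟨hx0, hx1⟩ := hIcc i j
    set N0 := N.updateRow i (Function.update (N i) j 0) with hN0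
    set N1 := N.updateRow i (Function.update (N i) j 1) with hN1
    have hmem : ∀ (y : ℝ), y = 0 ∨ y = 1 →
        ∀ q : Fin m × Fin (m + 1), q ∉ l →
          (N.updateRow i (Function.update (N i) j y)) q.1 q.2 = 0 ∨
          (N.updateRow i (Function.update (N i) j y)) q.1 q.2 = 1 := by
      rintro y hy ⟨a, b⟩ hq
      by_cases ha : a = i
      · subst ha
        rw [Matrix.updateRow_self]
        by_cases hb : b = j
        · subst hb; simpa using hy
        · rw [Function.update_of_ne hb]
          refine h (a, b) ?_
          simp only [List.mem_cons, not_or]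
          exact ⟨by simp [Prod.ext_iff, hb], hq⟩
      · rw [Matrix.updateRow_ne ha]
        refine h (a, b) ?_
        simp only [List.mem_cons, not_or]
        exact ⟨by simp [Prod.ext_iff, ha], hq⟩
    have hIcc' : ∀ (y : ℝ), y = 0 ∨ y = 1 →
        ∀ a b, (N.updateRow i (Function.update (N i) j y)) a b ∈ Set.Icc (0 : ℝ) 1 := by
      rintro y hy a b
      by_cases ha : a = i
      · subst ha
        rw [Matrix.updateRow_self]
        by_cases hb : b = j
        · subst hb
          rcases hy with hy | hy <;> subst hy <;> simp
        · rw [Function.update_of_ne hb]; exact hIcc a b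
      · rw [Matrix.updateRow_ne ha]; exact hIcc a b
    have h0 := ih N0 (hIcc' 0 (Or.inl rfl)) (hmem 0 (Or.inl rfl))
    have h1 := ih N1 (hIcc' 1 (Or.inr rfl)) (hmem 1 (Or.inr rfl))
    have hEq : N = N.updateRow i (Function.update (N i) j (N i j)) := by
      rw [Function.update_eq_self, Matrix.updateRow_eq_self]
    have hdet : (consMat m N).det
        = (1 - N i j) * (consMat m N0).det + (N i j) * (consMat m N1).det := by
      conv_lhs => rw [hEq]
      exact consMat_det_affine m N i j (N i j)
    rw [hdet]
    calc |(1 - N i j) * (consMat m N0).det + (N i j) * (consMat m N1).det|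
        ≤ |(1 - N i j) * (consMat m N0).det| + |(N i j) * (consMat m N1).det| := abs_add_le _ _
      _ = (1 - N i j) * |(consMat m N0).det| + (N i j) * |(consMat m N1).det| := by
          rw [abs_mul, abs_mul, abs_of_nonneg (by linarith), abs_of_nonneg hx0]
      _ ≤ c := by nlinarith [abs_nonneg (consMat m N0).det, abs_nonneg (consMat m N1).det]

private lemma cast01 (m : ℕ) (N : Matrix (Fin m) (Fin (m + 1)) ℝ)
    (h : ∀ i j, N i j = 0 ∨ N i j = 1) :
    ∃ N' : Matrix (Fin m) (Fin (m + 1)) ℤ, (∀ i j, N' i j = 0 ∨ N' i j = 1) ∧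
      (consMat m N).det = ((consMat m N').det : ℝ) := by
  classical
  refine ⟨Matrix.of fun i j => if N i j = 1 then (1 : ℤ) else 0,
    fun i j => by by_cases hc : N i j = 1 <;> simp [hc], ?_⟩
  rw [show ((consMat m (Matrix.of fun i j => if N i j = 1 then (1 : ℤ) else 0)).det : ℝ)
      = ((consMat m (Matrix.of fun i j => if N i j = 1 then (1 : ℤ) else 0)).map
          (Int.castRingHom ℝ)).det from RingHom.map_det (Int.castRingHom ℝ) _]
  congr 1
  ext a b
  refine Fin.cases ?_ ?_ a
  · simp [consMat_zero]
  · intro a'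
    rcases h a' b with h' | h' <;>
      simp [consMat_succ, h', Matrix.map_apply]

private lemma det_scale (m : ℕ) (N : Matrix (Fin m) (Fin (m + 1)) ℤ) :
    (consMat m (Matrix.of fun i j => 2 * N i j - 1)).det = 2 ^ m * (consMat m N).det := by
  have h1 : (consMat m (Matrix.of fun i j => 2 * N i j - 1)).det
      = (consMat m (Matrix.of fun i j => 2 * N i j)).det := by
    apply Matrix.det_eq_of_forall_row_eq_smul_add_const
      (Fin.cons 0 (fun _ => (-1 : ℤ))) 0 (by simp)
    intro a b
    refine Fin.cases ?_ (fun a' => ?_) a <;>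
      simp [consMat_zero, consMat_succ] <;> ring
  have h2 : consMat m (Matrix.of fun i j => 2 * N i j)
      = Matrix.diagonal (Fin.cons 1 fun _ => (2 : ℤ)) * consMat m N := by
    ext a b
    rw [Matrix.diagonal_mul]
    refine Fin.cases ?_ (fun a' => ?_) a <;>
      simp [consMat_zero, consMat_succ]
  rw [h1, h2, Matrix.det_mul, Matrix.det_diagonal]
  congr 1
  rw [Fin.prod_cons]
  simp

private lemma int_bound (m : ℕ) (cZ : ℤ)
    (hnum : ∀ d : ℤ, (2 ^ m * d) ^ 2 ≤ ((m : ℤ) + 1) ^ (m + 1) → |d| ≤ cZ)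
    (N' : Matrix (Fin m) (Fin (m + 1)) ℤ) (h01 : ∀ i j, N' i j = 0 ∨ N' i j = 1) :
    |(consMat m N').det| ≤ cZ := by
  set B : Matrix (Fin m) (Fin (m + 1)) ℤ := Matrix.of fun i j => 2 * N' i j - 1 with hB
  set Areal : Matrix (Fin (m + 1)) (Fin (m + 1)) ℝ :=
    (consMat m B).map (Int.castRingHom ℝ) with hA
  have hpm : ∀ i j, Areal i j = 1 ∨ Areal i j = -1 := by
    intro a b
    rw [hA, Matrix.map_apply]
    refine Fin.cases ?_ (fun a' => ?_) a
    · left; simp [consMat_zero]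
    · rcases h01 a' b with h' | h' <;> [right; left] <;>
        simp [consMat_succ, hB, h']
  have hHad := hadamard_pm (m + 1) (Nat.succ_pos m) Areal hpm
  have hAdet : Areal.det = ((consMat m B).det : ℝ) :=
    (RingHom.map_det (Int.castRingHom ℝ) _).symm
  rw [hAdet, hB, det_scale] at hHad
  have hZ : (2 ^ m * (consMat m N').det) ^ 2 ≤ ((m : ℤ) + 1) ^ (m + 1) := by
    have : (((2 ^ m * (consMat m N').det) ^ 2 : ℤ) : ℝ) ≤ ((((m : ℤ) + 1) ^ (m + 1) : ℤ) : ℝ) := by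
      push_cast
      push_cast at hHad
      convert hHad using 2 <;> ring
    exact_mod_cast this
  exact hnum _ hZ

private lemma real_upper (m : ℕ) (cZ : ℤ)
    (hnum : ∀ d : ℤ, (2 ^ m * d) ^ 2 ≤ ((m : ℤ) + 1) ^ (m + 1) → |d| ≤ cZ) :
    ∀ v : Fin (m + 1) → Fin m → ℝ, (∀ i, v i ∈ Set.Icc (0 : Fin m → ℝ) 1) →
      letendreD m v ≤ (cZ : ℝ) := by
  intro v hv
  have h01 : ∀ N : Matrix (Fin m) (Fin (m + 1)) ℝ, (∀ i j, N i j = 0 ∨ N i j = 1) →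
      |(consMat m N).det| ≤ (cZ : ℝ) := by
    intro N hN
    obtain ⟨N', h01', hdet⟩ := cast01 m N hN
    rw [hdet, ← Int.cast_abs]
    exact_mod_cast int_bound m cZ hnum N' h01'
  exact round_step m (cZ : ℝ) h01 (Finset.univ.toList) (Matrix.of fun i j => v j i)
    (fun i j => ⟨(hv j).1 i, (hv j).2 i⟩)
    (fun p hp => absurd (by simp) hp)

private lemma sup_eq (m : ℕ) (cZ : ℤ)
    (hnum : ∀ d : ℤ, (2 ^ m * d) ^ 2 ≤ ((m : ℤ) + 1) ^ (m + 1) → |d| ≤ cZ)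
    (v₀ : Fin (m + 1) → Fin m → ℝ) (hv₀ : ∀ i, v₀ i ∈ Set.Icc (0 : Fin m → ℝ) 1)
    (hD : letendreD m v₀ = (cZ : ℝ)) :
    letendreT m (Set.Icc 0 1) = (cZ : ℝ) := by
  unfold letendreT
  apply IsGreatest.csSup_eq
  constructor
  · exact ⟨v₀, hv₀, hD.symm⟩
  · rintro y ⟨v, hv, rfl⟩
    exact real_upper m cZ hnum v hv

theorem t_unit_cube_small_dims :
    letendreT 1 (Set.Icc 0 1) = 1 ∧ letendreT 2 (Set.Icc 0 1) = 1 ∧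
    letendreT 3 (Set.Icc 0 1) = 2 ∧ letendreT 4 (Set.Icc 0 1) = 3 := by
  refine ⟨?_, ?_, ?_, ?_⟩
  · rw [show (1 : ℝ) = ((1 : ℤ) : ℝ) by norm_num]
    apply sup_eq 1 1 ?_ ![![0], ![1]]
    · intro i
      rw [Set.mem_Icc]
      constructor <;> intro j <;> fin_cases i <;> fin_cases j <;> norm_num
    · have hM : (Matrix.of (Fin.cons (fun _ => (1 : ℝ))
          (fun i j => (![![0], ![1]] : Fin 2 → Fin 1 → ℝ) j i))) = !![1, 1; 0, 1] := by
        ext i j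
        fin_cases i <;> fin_cases j <;> rfl
      rw [letendreD, hM, Matrix.det_fin_two_of]
      norm_num
    · intro d h
      norm_num at h
      nlinarith [sq_abs d, abs_nonneg d]
  · rw [show (1 : ℝ) = ((1 : ℤ) : ℝ) by norm_num]
    apply sup_eq 2 1 ?_ ![![0, 0], ![1, 0], ![0, 1]]
    · intro i
      rw [Set.mem_Icc]
      constructor <;> intro j <;> fin_cases i <;> fin_cases j <;> norm_num
    · have hM : (Matrix.of (Fin.cons (fun _ => (1 : ℝ))
          (fun i j => (![![0, 0], ![1, 0], ![0, 1]] : Fin 3 → Fin 2 → ℝ) j i)))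
            = !![1, 1, 1; 0, 1, 0; 0, 0, 1] := by
        ext i j
        fin_cases i <;> fin_cases j <;> rfl
      rw [letendreD, hM]
      rw [Matrix.det_fin_three]
      norm_num [Matrix.vecHead, Matrix.vecTail]
      simp
    · intro d h
      norm_num at h
      nlinarith [sq_abs d, abs_nonneg d]
  · rw [show (2 : ℝ) = ((2 : ℤ) : ℝ) by norm_num]
    apply sup_eq 3 2 ?_ ![![0, 0, 0], ![1, 1, 0], ![1, 0, 1], ![0, 1, 1]]
    · intro i
      rw [Set.mem_Icc]
      constructor <;> intro j <;> fin_cases i <;> fin_cases j <;> norm_num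
    · have hM : (Matrix.of (Fin.cons (fun _ => (1 : ℝ))
          (fun i j => (![![0, 0, 0], ![1, 1, 0], ![1, 0, 1], ![0, 1, 1]] :
            Fin 4 → Fin 3 → ℝ) j i)))
            = !![1, 1, 1, 1; 0, 1, 1, 0; 0, 1, 0, 1; 0, 0, 1, 1] := by
        ext i j
        fin_cases i <;> fin_cases j <;> rfl
      rw [letendreD, hM]
      simp [Matrix.det_succ_row_zero, Fin.sum_univ_succ]
      norm_num
    · intro d h
      norm_num at h
      nlinarith [sq_abs d, abs_nonneg d]
  · rw [show (3 : ℝ) = ((3 : ℤ) : ℝ) by norm_num]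
    apply sup_eq 4 3 ?_
      ![![0, 0, 0, 0], ![0, 0, 1, 1], ![0, 1, 0, 1], ![1, 0, 0, 1], ![1, 1, 1, 0]]
    · intro i
      rw [Set.mem_Icc]
      constructor <;> intro j <;> fin_cases i <;> fin_cases j <;> norm_num
    · have hM : (Matrix.of (Fin.cons (fun _ => (1 : ℝ))
          (fun i j => (![![0, 0, 0, 0], ![0, 0, 1, 1], ![0, 1, 0, 1], ![1, 0, 0, 1],
            ![1, 1, 1, 0]] : Fin 5 → Fin 4 → ℝ) j i)))
            = !![1, 1, 1, 1, 1; 0, 0, 0, 1, 1; 0, 0, 1, 0, 1; 0, 1, 0, 0, 1; 0, 1, 1, 1, 0] := by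
        ext i j
        fin_cases i <;> fin_cases j <;> rfl
      rw [letendreD, hM]
      simp [Matrix.det_succ_row_zero, Fin.sum_univ_succ]
      norm_num [show Fin.succAbove (2 : Fin 4) (2 : Fin 3) = 3 from rfl,
        show Fin.succAbove (3 : Fin 4) (2 : Fin 3) = 2 from rfl]
      simp
      norm_num
    · intro d h
      norm_num at h
      nlinarith [sq_abs d, abs_nonneg d]
end

section
/- Let d ≥ 3 and let P(x) := x(x−1)⋯(x−d+1) be the falling factorial polynomial of degree d. Let x_1, …, x_n be nonnegative real numbers with x_1 + ⋯ + x_n = X and X ≥ d·n. Then P(x_1) + ⋯ + P(x_n) ≥ n · P(X/n). -/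
open Finset

/-- Weierstrass product inequality for numbers of the same sign, all ≥ -1. -/
private lemma one_add_sum_le_prod' {ι : Type*} (s : Finset ι) (a : ι → ℝ)
    (h1 : ∀ i ∈ s, -1 ≤ a i) (h2 : ∀ i ∈ s, ∀ k ∈ s, 0 ≤ a i * a k) :
    1 + ∑ i ∈ s, a i ≤ ∏ i ∈ s, (1 + a i) := by
  classical
  induction s using Finset.cons_induction with
  | empty => simp
  | cons i s his ih =>
    rw [Finset.sum_cons, Finset.prod_cons]
    have h1i : -1 ≤ a i := h1 i (Finset.mem_cons_self _ _)
    have hsum : 0 ≤ a i * ∑ k ∈ s, a k := by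
      rw [Finset.mul_sum]
      exact Finset.sum_nonneg fun k hk =>
        h2 i (Finset.mem_cons_self _ _) k (Finset.mem_cons_of_mem hk)
    have ih' := ih (fun k hk => h1 k (Finset.mem_cons_of_mem hk))
      (fun k hk l hl => h2 k (Finset.mem_cons_of_mem hk) l (Finset.mem_cons_of_mem hl))
    calc 1 + (a i + ∑ k ∈ s, a k)
        ≤ (1 + a i) * (1 + ∑ k ∈ s, a k) := by nlinarith
      _ ≤ (1 + a i) * ∏ k ∈ s, (1 + a k) :=
          mul_le_mul_of_nonneg_left ih' (by linarith)

private lemma fact_bound (j : ℕ) : ∀ d : ℕ, j + 2 ≤ d →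
    2 * ((j + 1).factorial * (d - 1 - j).factorial) ≤ d.factorial := by
  intro d
  induction d with
  | zero => intro h; omega
  | succ d ih =>
    intro h
    rcases Nat.lt_or_ge d (j + 2) with hd | hd
    · have hdj : d = j + 1 := by omega
      subst hdj
      have h1 : j + 1 + 1 - 1 - j = 1 := by omega
      rw [h1, Nat.factorial_one, Nat.factorial_succ]
      have : 2 ≤ j + 1 + 1 := by omega
      calc 2 * ((j + 1).factorial * 1) = 2 * (j + 1).factorial := by ring
        _ ≤ (j + 1 + 1) * (j + 1).factorial := Nat.mul_le_mul_right _ this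
    · have h1 : d + 1 - 1 - j = (d - 1 - j) + 1 := by omega
      rw [h1, Nat.factorial_succ, Nat.factorial_succ]
      calc 2 * ((j + 1).factorial * ((d - 1 - j + 1) * (d - 1 - j).factorial))
          = (d - 1 - j + 1) * (2 * ((j + 1).factorial * (d - 1 - j).factorial)) := by ring
        _ ≤ (d - 1 - j + 1) * d.factorial := Nat.mul_le_mul_left _ (ih hd)
        _ ≤ (d + 1) * d.factorial := Nat.mul_le_mul_right _ (by omega)

/-- The tangent line at `m ≥ d` lies below the falling factorial on `[0, ∞)`. -/
private lemma prod_range_one_add (k : ℕ) : ∏ i ∈ range k, (i + 1) = k.factorial := by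
  induction k with
  | zero => simp
  | succ k ih => rw [Finset.prod_range_succ, ih, Nat.factorial_succ]; ring

private lemma tangent (d : ℕ) (hd : 3 ≤ d) (m t : ℝ) (hm : (d : ℝ) ≤ m) (ht : 0 ≤ t) :
    (∏ i ∈ range d, (m - i)) * (1 + (∑ i ∈ range d, 1 / (m - i)) * (t - m)) ≤
      ∏ i ∈ range d, (t - i) := by
  have hpos : ∀ i ∈ range d, (0 : ℝ) < m - i := by
    intro i hi
    have : (i : ℝ) < d := by exact_mod_cast mem_range.mp hi
    linarith
  have hPm : 0 < ∏ i ∈ range d, (m - i) := prod_pos hpos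
  have hfact : ((d.factorial : ℝ)) ≤ ∏ i ∈ range d, (m - i) := by
    have h1 : (d.factorial : ℝ) = ∏ i ∈ range d, ((d - i : ℕ) : ℝ) := by
      rw [← Nat.cast_prod, ← Nat.descFactorial_eq_prod_range, Nat.descFactorial_self]
    rw [h1]
    apply prod_le_prod
    · intro i hi; positivity
    · intro i hi
      have hi' : i < d := mem_range.mp hi
      have : ((d - i : ℕ) : ℝ) = (d : ℝ) - i := by
        push_cast [Nat.cast_sub hi'.le]; ring
      rw [this]; linarith
  rcases le_or_gt ((d : ℝ) - 1) t with hcase | hcase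
  · -- convex regime : t ≥ d - 1
    set a : ℕ → ℝ := fun i => (t - m) / (m - i) with ha
    have h1 : ∀ i ∈ range d, -1 ≤ a i := by
      intro i hi
      have hmi := hpos i hi
      have hid : (i : ℝ) ≤ (d : ℝ) - 1 := by
        have : (i : ℕ) + 1 ≤ d := mem_range.mp hi
        have := (Nat.cast_le (α := ℝ)).mpr this
        push_cast at this; linarith
      rw [ha]
      rw [le_div_iff₀ hmi]
      linarith
    have h2 : ∀ i ∈ range d, ∀ k ∈ range d, 0 ≤ a i * a k := by
      intro i hi k hk
      have hmi := hpos i hi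
      have hmk := hpos k hk
      rw [ha]
      simp only
      rw [div_mul_div_comm]
      exact div_nonneg (mul_self_nonneg _) (by positivity)
    have key := one_add_sum_le_prod' (range d) a h1 h2
    have hsum : ∑ i ∈ range d, a i = (∑ i ∈ range d, 1 / (m - i)) * (t - m) := by
      rw [Finset.sum_mul]
      refine Finset.sum_congr rfl fun i hi => ?_
      rw [ha]
      simp only
      rw [div_eq_mul_inv, one_div]
      ring
    have hprod : ∏ i ∈ range d, (1 + a i)
        = (∏ i ∈ range d, (t - i)) / ∏ i ∈ range d, (m - i) := by
      rw [← Finset.prod_div_distrib]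
      refine Finset.prod_congr rfl fun i hi => ?_
      have hmi := hpos i hi
      rw [ha]
      field_simp
      ring
    rw [hsum, hprod] at key
    calc (∏ i ∈ range d, (m - i)) * (1 + (∑ i ∈ range d, 1 / (m - i)) * (t - m))
        ≤ (∏ i ∈ range d, (m - i)) *
            ((∏ i ∈ range d, (t - i)) / ∏ i ∈ range d, (m - i)) :=
          mul_le_mul_of_nonneg_left key hPm.le
      _ = ∏ i ∈ range d, (t - i) := by field_simp
  · -- t < d - 1 : use crude bounds
    set j := Nat.floor t with hj
    have hjt : (j : ℝ) ≤ t := Nat.floor_le ht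
    have htj : t < (j : ℝ) + 1 := Nat.lt_floor_add_one t
    have hjd : j + 2 ≤ d := by
      by_contra hc
      push_neg at hc
      have hj1 : d - 1 ≤ j := by omega
      have : ((d - 1 : ℕ) : ℝ) ≤ (j : ℝ) := by exact_mod_cast hj1
      have hcast : ((d - 1 : ℕ) : ℝ) = (d : ℝ) - 1 := by
        push_cast [Nat.cast_sub (by omega : 1 ≤ d)]; ring
      rw [hcast] at this
      linarith
    -- lower bound on the product at t
    set g : ℕ → ℕ := fun i => if i ≤ j then j + 1 - i else i - j with hg
    have hle : ∀ i ∈ range d, |t - (i : ℝ)| ≤ (g i : ℝ) := by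
      intro i hi
      simp only [hg]
      by_cases hij : i ≤ j
      · simp only [if_pos hij]
        have h1 : (i : ℝ) ≤ (j : ℝ) := by exact_mod_cast hij
        have h2 : ((j + 1 - i : ℕ) : ℝ) = (j : ℝ) + 1 - i := by
          push_cast [Nat.cast_sub (by omega : i ≤ j + 1)]; ring
        rw [abs_of_nonneg (by linarith), h2]
        linarith
      · simp only [if_neg hij]
        push_neg at hij
        have h1 : (j : ℝ) + 1 ≤ (i : ℝ) := by exact_mod_cast hij
        have h2 : ((i - j : ℕ) : ℝ) = (i : ℝ) - j := by
          push_cast [Nat.cast_sub (by omega : j ≤ i)]; ring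
        rw [abs_of_nonpos (by linarith), h2]
        linarith
    have hgprod : ∏ i ∈ range d, g i = (j + 1).factorial * (d - 1 - j).factorial := by
      rw [range_eq_Ico, ← Finset.prod_Ico_consecutive _ (Nat.zero_le (j + 1))
        (show j + 1 ≤ d by omega), ← range_eq_Ico]
      congr 1
      · have h1 : ∀ i ∈ range (j + 1), g i = j + 1 - i := by
          intro i hi
          have hij : i < j + 1 := mem_range.mp hi
          simp only [hg]
          rw [if_pos (by omega : i ≤ j)]
        rw [Finset.prod_congr rfl h1, ← Nat.descFactorial_eq_prod_range,
          Nat.descFactorial_self]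
      · rw [Finset.prod_Ico_eq_prod_range]
        have h1 : ∀ i ∈ range (d - (j + 1)), g (j + 1 + i) = i + 1 := by
          intro i hi
          simp only [hg]
          rw [if_neg (by omega : ¬ j + 1 + i ≤ j)]
          omega
        rw [Finset.prod_congr rfl h1, prod_range_one_add]
        congr 1
        omega
    have habs : |∏ i ∈ range d, (t - i)| ≤ ((j + 1).factorial * (d - 1 - j).factorial : ℕ) := by
      rw [Finset.abs_prod]
      calc ∏ i ∈ range d, |t - (i : ℝ)| ≤ ∏ i ∈ range d, (g i : ℝ) :=
            Finset.prod_le_prod (fun i _ => abs_nonneg _) hle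
        _ = ((∏ i ∈ range d, g i : ℕ) : ℝ) := by rw [Nat.cast_prod]
        _ = _ := by rw [hgprod]
    have hhalf : ((j + 1).factorial * (d - 1 - j).factorial : ℝ) ≤ (d.factorial : ℝ) / 2 := by
      have := fact_bound j d hjd
      have h2 : (2 * ((j + 1).factorial * (d - 1 - j).factorial) : ℝ) ≤ (d.factorial : ℝ) := by
        exact_mod_cast this
      push_cast at h2 ⊢
      linarith
    -- upper bound on the tangent line value
    have hsumge : (3 : ℝ) / 2 ≤ (∑ i ∈ range d, 1 / (m - i)) * (m - t) := by
      rw [Finset.sum_mul]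
      have hsub : ({d - 2, d - 1} : Finset ℕ) ⊆ range d := by
        intro k hk
        simp only [Finset.mem_insert, Finset.mem_singleton] at hk
        rcases hk with rfl | rfl <;> exact mem_range.mpr (by omega)
      have hmono : ∑ i ∈ ({d - 2, d - 1} : Finset ℕ), 1 / (m - (i : ℝ)) * (m - t)
          ≤ ∑ i ∈ range d, 1 / (m - (i : ℝ)) * (m - t) :=
        Finset.sum_le_sum_of_subset_of_nonneg hsub
        (fun i hi _ => by
          have := hpos i hi
          have hmt : 0 ≤ m - t := by
            have : (d : ℝ) - 1 ≥ t := hcase.le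
            linarith
          positivity)
      have hpair : ∑ i ∈ ({d - 2, d - 1} : Finset ℕ), 1 / (m - i) * (m - t)
          = 1 / (m - ((d - 2 : ℕ) : ℝ)) * (m - t) + 1 / (m - ((d - 1 : ℕ) : ℝ)) * (m - t) := by
        rw [Finset.sum_pair (by omega : d - 2 ≠ d - 1)]
      have hc2 : ((d - 2 : ℕ) : ℝ) = (d : ℝ) - 2 := by
        push_cast [Nat.cast_sub (by omega : 2 ≤ d)]; ring
      have hc1 : ((d - 1 : ℕ) : ℝ) = (d : ℝ) - 1 := by
        push_cast [Nat.cast_sub (by omega : 1 ≤ d)]; ring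
      have hu : (0 : ℝ) < m - ((d : ℝ) - 2) := by linarith
      have hv : (0 : ℝ) < m - ((d : ℝ) - 1) := by linarith
      have e1 : (1 : ℝ) ≤ 1 / (m - ((d : ℝ) - 1)) * (m - t) := by
        rw [div_mul_eq_mul_div, one_mul, le_div_iff₀ hv]
        linarith
      have e2 : (1 : ℝ) / 2 ≤ 1 / (m - ((d : ℝ) - 2)) * (m - t) := by
        rw [div_mul_eq_mul_div, one_mul, div_le_div_iff₀ (by norm_num) hu]
        linarith
      calc (3 : ℝ) / 2 ≤ 1 / (m - ((d : ℝ) - 2)) * (m - t)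
            + 1 / (m - ((d : ℝ) - 1)) * (m - t) := by linarith
        _ = ∑ i ∈ ({d - 2, d - 1} : Finset ℕ), 1 / (m - i) * (m - t) := by
            rw [hpair, hc1, hc2]
        _ ≤ ∑ i ∈ range d, 1 / (m - i) * (m - t) := hmono
    have hlin : 1 + (∑ i ∈ range d, 1 / (m - i)) * (t - m) ≤ -(1 / 2) := by
      have : (∑ i ∈ range d, 1 / (m - i)) * (t - m)
          = -((∑ i ∈ range d, 1 / (m - i)) * (m - t)) := by ring
      rw [this]; linarith
    calc (∏ i ∈ range d, (m - i)) * (1 + (∑ i ∈ range d, 1 / (m - i)) * (t - m))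
        ≤ (∏ i ∈ range d, (m - i)) * (-(1 / 2)) := mul_le_mul_of_nonneg_left hlin hPm.le
      _ ≤ -((d.factorial : ℝ) / 2) := by linarith
      _ ≤ -(((j + 1).factorial * (d - 1 - j).factorial : ℕ) : ℝ) := by
          push_cast at hhalf ⊢; linarith
      _ ≤ ∏ i ∈ range d, (t - i) := by
          have := neg_abs_le (∏ i ∈ range d, (t - (i : ℝ)))
          linarith [habs]

theorem falling_factorial_superadditive (d : ℕ) (hd : 3 ≤ d)
    (n : ℕ) (x : Fin n → ℝ) (X : ℝ)
    (hx : ∀ i, 0 ≤ x i) (hsum : ∑ i, x i = X) (hX : (d : ℝ) * n ≤ X) :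
    (n : ℝ) * ∏ i ∈ Finset.range d, (X / n - i) ≤
      ∑ j, ∏ i ∈ Finset.range d, (x j - i) := by
  rcases Nat.eq_zero_or_pos n with rfl | hn
  · simp
  have hn' : (0 : ℝ) < n := by exact_mod_cast hn
  obtain ⟨m, hmdef⟩ : ∃ m : ℝ, m = X / n := ⟨_, rfl⟩
  rw [← hmdef]
  have hm : (d : ℝ) ≤ m := by rw [hmdef, le_div_iff₀ hn']; exact hX
  have hX' : (n : ℝ) * m = X := by rw [hmdef]; field_simp
  have h2 := Finset.sum_le_sum (fun (j : Fin n) (_ : j ∈ Finset.univ) =>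
    tangent d hd m (x j) hm (hx j))
  refine le_trans (le_of_eq ?_) h2
  rw [Finset.sum_congr rfl (fun (j : Fin n) _ =>
    (show (∏ i ∈ range d, (m - i)) * (1 + (∑ i ∈ range d, 1 / (m - i)) * (x j - m))
        = ((∏ i ∈ range d, (m - i)) -
            (∏ i ∈ range d, (m - i)) * (∑ i ∈ range d, 1 / (m - i)) * m)
          + ((∏ i ∈ range d, (m - i)) * (∑ i ∈ range d, 1 / (m - i))) * x j from by ring))]
  rw [Finset.sum_add_distrib, Finset.sum_const, Finset.card_univ, Fintype.card_fin,
    nsmul_eq_mul, ← Finset.mul_sum, hsum]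
  linear_combination ((∏ i ∈ range d, (m - i)) * (∑ i ∈ range d, 1 / (m - i))) * hX'
end

section
/- For the polynomial P(x) = x(x−1)⋯(x−d+1) with d ≥ 3, we have max_{x ∈ [0, d−1]} |P'(x)| ≤ d!, and P'(x) < P'(d) for all x ∈ [0, d), and P' is strictly increasing on [d, ∞). -/
open Finset

private lemma fact_mul_fact_le (a b : ℕ) (ha : 1 ≤ a) (hb : 1 ≤ b) :
    a.factorial * b.factorial ≤ (a + b - 1).factorial := by
  induction b with
  | zero => omega
  | succ n ih =>
    rcases Nat.eq_zero_or_pos n with hn | hn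
    · subst hn; simpa using Nat.le_refl _
    · have h1 := ih hn
      have : a.factorial * (n+1).factorial = (n+1) * (a.factorial * n.factorial) := by
        rw [Nat.factorial_succ]; ring
      rw [this]
      calc (n+1) * (a.factorial * n.factorial) ≤ (n+1) * (a + n - 1).factorial :=
            Nat.mul_le_mul_left _ h1
        _ ≤ (a + n) * (a + n - 1).factorial := Nat.mul_le_mul_right _ (by omega)
        _ = (a + n).factorial := Nat.mul_factorial_pred (by omega)
        _ = (a + (n+1) - 1).factorial := by congr 1 <;> omega

private lemma prod_sub_eq_fact (n : ℕ) : ∏ i ∈ range n, (n - i) = n.factorial := by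
  calc ∏ i ∈ range n, (n - i) = ∏ j ∈ range n, (n - (n - 1 - j)) := by
        rw [Finset.prod_range_reflect]
    _ = ∏ j ∈ range n, (j + 1) := by
        apply Finset.prod_congr rfl; intro j hj; rw [Finset.mem_range] at hj; omega
    _ = n.factorial := Finset.prod_range_add_one_eq_factorial n

private lemma prod_shift (n : ℕ) : ∏ i ∈ range n, (i + 2) = (n+1).factorial := by
  induction n with
  | zero => simp
  | succ n ih => rw [Finset.prod_range_succ, ih, Nat.factorial_succ (n+1)]; ring

private lemma derivP_eq (d : ℕ) (x : ℝ) :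
    deriv (fun y : ℝ => ∏ i ∈ range d, (y - i)) x
      = ∑ k ∈ range d, ∏ i ∈ (range d).erase k, (x - i) := by
  have h : ∀ i ∈ range d, HasDerivAt (fun y : ℝ => y - (i : ℝ)) 1 x :=
    fun i _ => (hasDerivAt_id x).sub_const _
  have := (HasDerivAt.fun_finsetProd h).deriv
  simpa using this

private lemma prod_abs_le (d : ℕ) (hd : 3 ≤ d) (k : ℕ) (x : ℝ) (hx0 : 0 ≤ x)
    (hx1 : x ≤ (d : ℝ) - 1) :
    |∏ i ∈ (range d).erase k, (x - i)| ≤ ((d-1).factorial : ℝ) := by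
  set m : ℕ := min ⌊x⌋₊ (d - 2) with hm
  have hmd : m ≤ d - 2 := min_le_right _ _
  have hmx : (m : ℝ) ≤ x := by
    have h1 : (m : ℝ) ≤ (⌊x⌋₊ : ℝ) := by exact_mod_cast min_le_left _ _
    exact h1.trans (Nat.floor_le hx0)
  have hxm : x ≤ (m : ℝ) + 1 := by
    rcases le_or_gt ⌊x⌋₊ (d - 2) with h | h
    · have : m = ⌊x⌋₊ := by omega
      rw [this]
      exact (Nat.lt_floor_add_one x).le
    · have : m = d - 2 := by omega
      rw [this]
      have : ((d - 2 : ℕ) : ℝ) = (d : ℝ) - 2 := by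
        push_cast [Nat.cast_sub (by omega : 2 ≤ d)]; ring
      rw [this]; linarith
  set b : ℕ → ℕ := fun i => if i ≤ m then m + 1 - i else i - m with hb
  have habs : ∀ i ∈ range d, |x - (i : ℝ)| ≤ (b i : ℝ) := by
    intro i _
    rcases le_or_gt i m with hi | hi
    · have hbi : (b i : ℝ) = (m : ℝ) + 1 - i := by
        simp only [hb, if_pos hi]
        push_cast [Nat.cast_sub (by omega : i ≤ m + 1)]; ring
      have hix : (i : ℝ) ≤ m := by exact_mod_cast hi
      rw [abs_le, hbi]; constructor <;> linarith
    · have hbi : (b i : ℝ) = (i : ℝ) - m := by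
        simp only [hb, if_neg (by omega : ¬ i ≤ m)]
        push_cast [Nat.cast_sub (by omega : m ≤ i)]; ring
      have hix : (m : ℝ) + 1 ≤ i := by exact_mod_cast hi
      rw [abs_le, hbi]; constructor <;> linarith
  have hb1 : ∀ i, 1 ≤ b i := by intro i; simp only [hb]; split <;> omega
  have hprod : ∏ i ∈ range d, b i = (m+1).factorial * (d - m - 1).factorial := by
    rw [show d = (m+1) + (d - m - 1) by omega, Finset.prod_range_add]
    congr 1
    · rw [← prod_sub_eq_fact (m+1)]
      apply Finset.prod_congr rfl
      intro i hi; rw [Finset.mem_range] at hi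
      simp only [hb, if_pos (by omega : i ≤ m)]
    · rw [show m + 1 + (d - m - 1) - m - 1 = d - m - 1 from by omega,
        ← Finset.prod_range_add_one_eq_factorial (d - m - 1)]
      apply Finset.prod_congr rfl
      intro i _
      simp only [hb, if_neg (by omega : ¬ m + 1 + i ≤ m)]; omega
  have hfle : ∏ i ∈ range d, b i ≤ (d-1).factorial := by
    rw [hprod]
    calc (m+1).factorial * (d - m - 1).factorial
        ≤ ((m+1) + (d - m - 1) - 1).factorial :=
          fact_mul_fact_le _ _ (by omega) (by omega)
      _ = (d-1).factorial := by congr 1 <;> omega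
  calc |∏ i ∈ (range d).erase k, (x - i)|
      = ∏ i ∈ (range d).erase k, |x - (i : ℝ)| := Finset.abs_prod _ _
    _ ≤ ∏ i ∈ (range d).erase k, (b i : ℝ) := by
        apply Finset.prod_le_prod (fun i _ => abs_nonneg _)
        intro i hi
        exact habs i (Finset.mem_of_mem_erase hi)
    _ = ((∏ i ∈ (range d).erase k, b i : ℕ) : ℝ) := by push_cast; rfl
    _ ≤ ((∏ i ∈ range d, b i : ℕ) : ℝ) := by
        exact_mod_cast Finset.prod_le_prod_of_subset_of_one_le'
          (Finset.erase_subset _ _) (fun i _ _ => hb1 i)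
    _ ≤ ((d-1).factorial : ℝ) := by exact_mod_cast hfle

private lemma smon (d : ℕ) (hd : 3 ≤ d) :
    StrictMonoOn (deriv (fun y : ℝ => ∏ i ∈ range d, (y - i))) (Set.Ici ((d : ℝ) - 1)) := by
  intro x hx y hy hxy
  rw [Set.mem_Ici] at hx hy
  rw [derivP_eq, derivP_eq]
  apply Finset.sum_lt_sum
  · intro k _
    apply Finset.prod_le_prod
    · intro i hi
      have hi' : i ≤ d - 1 := by
        have := Finset.mem_range.mp (Finset.mem_of_mem_erase hi); omega
      have : (i : ℝ) ≤ (d : ℝ) - 1 := by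
        have : ((i : ℕ) : ℝ) ≤ ((d - 1 : ℕ) : ℝ) := by exact_mod_cast hi'
        rw [Nat.cast_sub (by omega : 1 ≤ d)] at this; simpa using this
      linarith
    · intro i _; linarith
  · refine ⟨d - 1, Finset.mem_range.mpr (by omega), ?_⟩
    apply Finset.prod_lt_prod_of_nonempty
    · intro i hi
      have hi1 : i ≠ d - 1 := (Finset.mem_erase.mp hi).1
      have hi2 : i < d := Finset.mem_range.mp (Finset.mem_of_mem_erase hi)
      have : i ≤ d - 2 := by omega
      have h3 : (i : ℝ) ≤ (d : ℝ) - 2 := by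
        have : ((i : ℕ) : ℝ) ≤ ((d - 2 : ℕ) : ℝ) := by exact_mod_cast this
        rw [Nat.cast_sub (by omega : 2 ≤ d)] at this; simpa using this
      linarith
    · intro i _; linarith
    · refine ⟨0, ?_⟩
      rw [Finset.mem_erase, Finset.mem_range]
      omega

private lemma deriv_at_d_gt (d : ℕ) (hd : 3 ≤ d) :
    (d.factorial : ℝ) < ∑ k ∈ range d, ∏ i ∈ (range d).erase k, ((d : ℝ) - i) := by
  have herase : (range d).erase (d-1) = range (d-1) := by
    ext i
    simp only [Finset.mem_erase, Finset.mem_range]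
    omega
  have hkey : ∏ i ∈ (range d).erase (d-1), ((d : ℝ) - i) = (d.factorial : ℝ) := by
    rw [herase]
    have hnat : ∏ i ∈ range (d-1), (d - i) = d.factorial := by
      calc ∏ i ∈ range (d-1), (d - i)
          = ∏ j ∈ range (d-1), (d - ((d-1) - 1 - j)) := by rw [Finset.prod_range_reflect]
        _ = ∏ j ∈ range (d-1), (j + 2) := by
            apply Finset.prod_congr rfl
            intro j hj; rw [Finset.mem_range] at hj; omega
        _ = ((d-1)+1).factorial := prod_shift (d-1)
        _ = d.factorial := by congr 1 <;> omega
    calc ∏ i ∈ range (d-1), ((d : ℝ) - i)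
        = ((∏ i ∈ range (d-1), (d - i) : ℕ) : ℝ) := by
          rw [Nat.cast_prod]
          apply Finset.prod_congr rfl
          intro i hi; rw [Finset.mem_range] at hi
          rw [Nat.cast_sub (by omega : i ≤ d)]
      _ = (d.factorial : ℝ) := by rw [hnat]
  have hpos : ∀ k ∈ (range d).erase (d-1), 0 < ∏ i ∈ (range d).erase k, ((d : ℝ) - i) := by
    intro k _
    apply Finset.prod_pos
    intro i hi
    have : i < d := Finset.mem_range.mp (Finset.mem_of_mem_erase hi)
    have : (i : ℝ) < d := by exact_mod_cast this
    linarith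
  have hsum : ∑ k ∈ range d, ∏ i ∈ (range d).erase k, ((d : ℝ) - i)
      = (∏ i ∈ (range d).erase (d-1), ((d : ℝ) - i))
        + ∑ k ∈ (range d).erase (d-1), ∏ i ∈ (range d).erase k, ((d : ℝ) - i) :=
    (Finset.add_sum_erase _ _ (Finset.mem_range.mpr (by omega))).symm
  have hne : ((range d).erase (d-1)).Nonempty := by
    refine ⟨0, ?_⟩; rw [Finset.mem_erase, Finset.mem_range]; omega
  have := Finset.sum_pos hpos hne
  rw [hsum, hkey]
  linarith

theorem falling_factorial_deriv_bounds (d : ℕ) (hd : 3 ≤ d) :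
    (∀ x ∈ Set.Icc (0 : ℝ) ((d : ℝ) - 1),
        |deriv (fun y : ℝ => ∏ i ∈ Finset.range d, (y - i)) x| ≤ (d.factorial : ℝ)) ∧
    (∀ x ∈ Set.Ico (0 : ℝ) (d : ℝ),
        deriv (fun y : ℝ => ∏ i ∈ Finset.range d, (y - i)) x <
          deriv (fun y : ℝ => ∏ i ∈ Finset.range d, (y - i)) (d : ℝ)) ∧
    StrictMonoOn (deriv (fun y : ℝ => ∏ i ∈ Finset.range d, (y - i))) (Set.Ici (d : ℝ)) := by
  have part1 : ∀ x ∈ Set.Icc (0 : ℝ) ((d : ℝ) - 1),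
      |deriv (fun y : ℝ => ∏ i ∈ Finset.range d, (y - i)) x| ≤ (d.factorial : ℝ) := by
    intro x hx
    obtain ⟨hx0, hx1⟩ := hx
    rw [derivP_eq]
    calc |∑ k ∈ range d, ∏ i ∈ (range d).erase k, (x - i)|
        ≤ ∑ k ∈ range d, |∏ i ∈ (range d).erase k, (x - i)| := Finset.abs_sum_le_sum_abs _ _
      _ ≤ ∑ _k ∈ range d, ((d-1).factorial : ℝ) :=
          Finset.sum_le_sum (fun k _ => prod_abs_le d hd k x hx0 hx1)
      _ = (d : ℝ) * ((d-1).factorial : ℝ) := by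
          rw [Finset.sum_const, Finset.card_range, nsmul_eq_mul]
      _ = (d.factorial : ℝ) := by
          rw [← Nat.cast_mul, Nat.mul_factorial_pred (by omega)]
  refine ⟨part1, ?_, (smon d hd).mono (Set.Ici_subset_Ici.mpr (by linarith))⟩
  intro x hx
  obtain ⟨hx0, hx1⟩ := hx
  rcases lt_or_ge x ((d : ℝ) - 1) with h | h
  · have h1 := part1 x ⟨hx0, h.le⟩
    have h2 : deriv (fun y : ℝ => ∏ i ∈ Finset.range d, (y - i)) (d : ℝ)
        = ∑ k ∈ range d, ∏ i ∈ (range d).erase k, ((d : ℝ) - i) := derivP_eq d d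
    have h3 := deriv_at_d_gt d hd
    have := abs_le.mp h1
    rw [h2]
    linarith [this.2]
  · exact smon d hd (Set.mem_Ici.mpr h) (Set.mem_Ici.mpr (by linarith)) hx1
end

section
/- Let N be a finite set of points in ℝ^m and let S ⊆ N be a subset of maximal cardinality such that no m+1 distinct points of S lie in a common affine hyperplane (i.e. D(v_1,…,v_{m+1}) > 0 for all pairwise-distinct v_1,…,v_{m+1} ∈ S). Let K be the maximal number of points of N contained in a single affine hyperplane. Then #N ≤ K · max(1, C(#S, m)), where C(·,·) is the binomial coefficient. -/
/-- A finite set of points is in general position if no `m+1` distinct points of it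
lie in a common affine hyperplane. -/
def GeneralPosition (m : ℕ) (S : Finset (Fin m → ℝ)) : Prop :=
  ∀ v : Fin (m + 1) → (Fin m → ℝ),
    (∀ i, v i ∈ S) → Function.Injective v → 0 < letendreD m v

namespace Letendre
open Matrix

variable {m : ℕ}

noncomputable def lift (x : Fin m → ℝ) : Fin (m + 1) → ℝ := Fin.cons 1 x

lemma lift_inj : Function.Injective (lift (m := m)) := by
  intro a b h
  funext i
  simpa [lift] using congrFun h i.succ

lemma D_abs_det (v : Fin (m + 1) → (Fin m → ℝ)) :
    letendreD m v = |(Matrix.of fun i j => lift (v j) i).det| := by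
  unfold letendreD
  congr 2
  ext i j
  refine Fin.cases ?_ (fun i => ?_) i <;> simp [lift]

lemma D_nonneg (v : Fin (m + 1) → (Fin m → ℝ)) : 0 ≤ letendreD m v :=
  abs_nonneg _

lemma D_eq_zero_iff (v : Fin (m + 1) → (Fin m → ℝ)) :
    letendreD m v = 0 ↔ ∃ g : Fin (m + 1) → ℝ, g ≠ 0 ∧ ∑ j, g j • lift (v j) = 0 := by
  have hmv : ∀ g : Fin (m + 1) → ℝ,
      (Matrix.of fun i j => lift (v j) i) *ᵥ g = ∑ j, g j • lift (v j) := by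
    intro g
    funext i
    simp [Matrix.mulVec, dotProduct, Finset.sum_apply, mul_comm]
  rw [D_abs_det, abs_eq_zero, ← Matrix.exists_mulVec_eq_zero_iff]
  constructor
  · rintro ⟨g, hg, hMg⟩
    exact ⟨g, hg, by rw [← hmv]; exact hMg⟩
  · rintro ⟨g, hg, hsum⟩
    exact ⟨g, hg, by rw [hmv]; exact hsum⟩

/-- A nonzero vector orthogonal to at most `m` given vectors in `ℝ^{m+1}`. -/
lemma exists_perp {k : ℕ} (hk : k ≤ m) (f : Fin k → (Fin (m + 1) → ℝ)) :
    ∃ u : Fin (m + 1) → ℝ, u ≠ 0 ∧ ∀ j, ∑ i, u i * f j i = 0 := by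
  classical
  set M : Matrix (Fin (m + 1)) (Fin (m + 1)) ℝ :=
    Matrix.of (fun i j => if h : (j : ℕ) < k then f ⟨j, h⟩ i else 0) with hM
  have hdet : M.det = 0 := by
    apply Matrix.det_eq_zero_of_column_eq_zero (Fin.last m)
    intro i
    simp [hM, Fin.val_last, Nat.not_lt.mpr hk]
  obtain ⟨u, hu, huM⟩ := Matrix.exists_vecMul_eq_zero_iff.mpr hdet
  refine ⟨u, hu, fun j => ?_⟩
  have hj : (j : ℕ) < m + 1 := lt_of_lt_of_le j.isLt (by omega)
  have h1 : (u ᵥ* M) ⟨(j : ℕ), hj⟩ = 0 := congrFun huM _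
  have h2 : ∀ i, M i ⟨(j : ℕ), hj⟩ = f j i := by
    intro i
    simp [hM, j.isLt]
  simpa [Matrix.vecMul, dotProduct, h2] using h1


/-- Linear functional `y ↦ ∑ i, u i * y i`. -/
noncomputable def Lu (u : Fin (m + 1) → ℝ) : (Fin (m + 1) → ℝ) →ₗ[ℝ] ℝ :=
  ∑ i, u i • LinearMap.proj i

lemma Lu_apply (u y : Fin (m + 1) → ℝ) : Lu u y = ∑ i, u i * y i := by
  simp [Lu]

lemma Lu_cons_lift (w : Fin m → ℝ) (c : ℝ) (p : Fin m → ℝ) :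
    Lu (Fin.cons (-c) w) (lift p) = (∑ i, w i * p i) - c := by
  rw [Lu_apply, Fin.sum_univ_succ]
  simp [lift, sub_eq_neg_add]

lemma cons_head_tail (u : Fin (m + 1) → ℝ) : u = Fin.cons (u 0) (fun i => u i.succ) :=
  funext (Fin.cases rfl fun i => by simp)

/-- Every finset of at most `m` points lies on an affine hyperplane. -/
lemma exists_hyperplane (hm : 1 ≤ m) (T : Finset (Fin m → ℝ)) (hT : T.card ≤ m) :
    ∃ w : Fin m → ℝ, ∃ c : ℝ, w ≠ 0 ∧ ∀ p ∈ T, ∑ i, w i * p i = c := by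
  classical
  obtain ⟨u, hu, hperp⟩ := exists_perp hT (fun j => lift ((T.equivFin.symm j : _) : Fin m → ℝ))
  rcases T.eq_empty_or_nonempty with h | ⟨p₀, hp₀⟩
  · refine ⟨fun _ => 1, 0, ?_, by simp [h]⟩
    intro hw
    simpa using congrFun hw ⟨0, hm⟩
  · have key : ∀ p ∈ T, (∑ i, u i.succ * p i) = -u 0 := by
      intro p hp
      have := hperp (T.equivFin ⟨p, hp⟩)
      rw [Equiv.symm_apply_apply] at this
      rw [Fin.sum_univ_succ] at this
      simp only [lift, Fin.cons_zero, Fin.cons_succ, mul_one] at this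
      linarith
    refine ⟨fun i => u i.succ, -u 0, ?_, key⟩
    intro hw
    apply hu
    have h0 : u 0 = 0 := by
      have := key p₀ hp₀
      simp only [funext_iff] at hw
      simp [hw] at this
      linarith
    rw [cons_head_tail u, h0, hw]
    funext i
    refine Fin.cases rfl (fun i => rfl) i

lemma no_combo_of_GP {S : Finset (Fin m → ℝ)} (hS : GeneralPosition m S)
    (v : Fin (m + 1) → (Fin m → ℝ)) (hv : ∀ i, v i ∈ S) (hinj : Function.Injective v)
    (g : Fin (m + 1) → ℝ) (hg : ∑ j, g j • lift (v j) = 0) : g = 0 := by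
  by_contra hne
  have h1 := hS v hv hinj
  have h2 : letendreD m v = 0 := (D_eq_zero_iff v).mpr ⟨g, hne, hg⟩
  rw [h2] at h1
  exact lt_irrefl _ h1

lemma combo_m_of_GP {S : Finset (Fin m → ℝ)} (hS : GeneralPosition m S)
    (hcard : m + 1 ≤ S.card) (t : Fin m → (Fin m → ℝ)) (ht : ∀ i, t i ∈ S)
    (hinj : Function.Injective t) (g : Fin m → ℝ)
    (hg : ∑ i, g i • lift (t i) = 0) : g = 0 := by
  classical
  set T : Finset (Fin m → ℝ) := Finset.image t Finset.univ with hT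
  have hTcard : T.card = m := by
    rw [hT, Finset.card_image_of_injective _ hinj, Finset.card_univ, Fintype.card_fin]
  have hTS : T ⊆ S := by
    intro p hp
    rw [hT, Finset.mem_image] at hp
    obtain ⟨i, _, rfl⟩ := hp
    exact ht i
  have hns : ¬ S ⊆ T := fun h => by have := Finset.card_le_card h; omega
  obtain ⟨s, hsS, hsT⟩ := Finset.not_subset.mp hns
  set v : Fin (m + 1) → (Fin m → ℝ) := Fin.snoc t s with hv
  have hvS : ∀ i, v i ∈ S := by
    intro i
    refine Fin.lastCases ?_ (fun i => ?_) i
    · simpa [hv] using hsS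
    · simp only [hv, Fin.snoc_castSucc]
      exact ht i
  have hts : ∀ i, t i ≠ s := fun i h =>
    hsT (h ▸ Finset.mem_image_of_mem t (Finset.mem_univ i))
  have hvinj : Function.Injective v := by
    intro a b
    refine Fin.lastCases ?_ (fun i => ?_) a <;> refine Fin.lastCases ?_ (fun j => ?_) b
    · intro _; rfl
    · intro h
      simp only [hv, Fin.snoc_last, Fin.snoc_castSucc] at h
      exact absurd h.symm (hts j)
    · intro h
      simp only [hv, Fin.snoc_last, Fin.snoc_castSucc] at h
      exact absurd h (hts i)
    · intro h
      simp only [hv, Fin.snoc_castSucc] at h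
      exact congrArg Fin.castSucc (hinj h)
  have hsum : ∑ j, (Fin.snoc g 0 : Fin (m + 1) → ℝ) j • lift (v j) = 0 := by
    rw [Fin.sum_univ_castSucc]
    simp only [hv, Fin.snoc_castSucc, Fin.snoc_last, zero_smul, add_zero]
    exact hg
  have hz := no_combo_of_GP hS v hvS hvinj _ hsum
  funext i
  have := congrFun hz i.castSucc
  simpa using this

lemma hyperplane_of_perp (hm : 1 ≤ m) {N : Finset (Fin m → ℝ)} {u : Fin (m + 1) → ℝ}
    (hu : u ≠ 0) (h : ∀ x ∈ N, ∑ i : Fin (m + 1), u i * lift x i = 0) :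
    ∃ w : Fin m → ℝ, ∃ c : ℝ, w ≠ 0 ∧ ∀ x ∈ N, ∑ i, w i * x i = c := by
  rcases N.eq_empty_or_nonempty with hN | ⟨p₀, hp₀⟩
  · refine ⟨fun _ => 1, 0, ?_, by simp [hN]⟩
    intro hw
    simpa using congrFun hw ⟨0, hm⟩
  · have key : ∀ p ∈ N, (∑ i, u i.succ * p i) = -u 0 := by
      intro p hp
      have := h p hp
      rw [Fin.sum_univ_succ] at this
      simp only [lift, Fin.cons_zero, Fin.cons_succ, mul_one] at this
      linarith
    refine ⟨fun i => u i.succ, -u 0, ?_, key⟩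
    intro hw
    apply hu
    have h0 : u 0 = 0 := by
      have := key p₀ hp₀
      simp only [funext_iff] at hw
      simp [hw] at this
      linarith
    rw [cons_head_tail u, h0, hw]
    funext i
    refine Fin.cases rfl (fun i => rfl) i

lemma exists_hyperplane_all (hm : 1 ≤ m) {N S : Finset (Fin m → ℝ)}
    (hmax : ∀ T ⊆ N, GeneralPosition m T → T.card ≤ S.card) (hScard : S.card ≤ m) :
    ∃ w : Fin m → ℝ, ∃ c : ℝ, w ≠ 0 ∧ ∀ x ∈ N, ∑ i, w i * x i = c := by
  classical
  set Y : Set (Fin (m + 1) → ℝ) := lift '' (N : Set (Fin m → ℝ)) with hY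
  obtain ⟨b, hbY, hspan, hbind⟩ := exists_linearIndependent ℝ Y
  have hYfin : Y.Finite := N.finite_toSet.image _
  have hbfin : b.Finite := hYfin.subset hbY
  have hble : hbfin.toFinset.card ≤ m := by
    by_contra hgt
    push_neg at hgt
    obtain ⟨sub, hsubb, hsubcard⟩ := Finset.exists_subset_card_eq hgt
    set e : Fin (m + 1) ≃ (sub : Finset (Fin (m + 1) → ℝ)) :=
      (finCongr hsubcard.symm).trans sub.equivFin.symm with he
    have hmemY : ∀ y ∈ sub, y ∈ Y := fun y hy => hbY (hbfin.mem_toFinset.mp (hsubb hy))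
    have hxy : ∀ j : Fin (m + 1), ∃ x, x ∈ N ∧ lift x = ((e j : _) : Fin (m + 1) → ℝ) := by
      intro j
      obtain ⟨x, hx, hlx⟩ := hmemY _ (e j).2
      exact ⟨x, hx, hlx⟩
    choose v hvN hvlift using hxy
    have hvinj : Function.Injective v := by
      intro a b hab
      have : ((e a : _) : Fin (m + 1) → ℝ) = (e b : _) := by
        rw [← hvlift a, ← hvlift b, hab]
      exact e.injective (Subtype.ext this)
    set T : Finset (Fin m → ℝ) := Finset.image v Finset.univ with hT
    have hTN : T ⊆ N := by
      intro p hp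
      rw [hT, Finset.mem_image] at hp
      obtain ⟨j, _, rfl⟩ := hp
      exact hvN j
    have hTcard : T.card = m + 1 := by
      rw [hT, Finset.card_image_of_injective _ hvinj, Finset.card_univ, Fintype.card_fin]
    have hTGP : GeneralPosition m T := by
      intro τ hτ hτinj
      have hτb : ∀ j, lift (τ j) ∈ b := by
        intro j
        have := hτ j
        rw [hT, Finset.mem_image] at this
        obtain ⟨jj, _, hjj⟩ := this
        rw [← hjj, hvlift jj]
        exact hbfin.mem_toFinset.mp (hsubb (e jj).2)
      have hliftτinj : Function.Injective (fun j => lift (τ j)) :=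
        fun a b hab => hτinj (lift_inj hab)
      have hind : LinearIndependent ℝ (fun j : Fin (m + 1) => lift (τ j)) := by
        have := hbind.comp (fun j : Fin (m + 1) => (⟨lift (τ j), hτb j⟩ : b))
          (fun a b hab => hliftτinj (congrArg Subtype.val hab))
        exact this
      have hDne : letendreD m τ ≠ 0 := by
        intro h0
        obtain ⟨g, hg, hsum⟩ := (D_eq_zero_iff τ).mp h0
        exact hg (funext (Fintype.linearIndependent_iff.mp hind g hsum))
      exact lt_of_le_of_ne (D_nonneg τ) (Ne.symm hDne)
    have := hmax T hTN hTGP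
    omega
  obtain ⟨u, hu, hperp⟩ :=
    exists_perp hble (fun j => ((hbfin.toFinset.equivFin.symm j : _) : Fin (m + 1) → ℝ))
  have hbker : ∀ y ∈ b, Lu u y = 0 := by
    intro y hy
    have := hperp (hbfin.toFinset.equivFin ⟨y, hbfin.mem_toFinset.mpr hy⟩)
    rw [Equiv.symm_apply_apply] at this
    rw [Lu_apply]
    exact this
  have hYker : ∀ y ∈ Y, Lu u y = 0 := by
    have hsle : Submodule.span ℝ Y ≤ LinearMap.ker (Lu u) := by
      rw [← hspan]
      exact Submodule.span_le.mpr fun y hy => LinearMap.mem_ker.mpr (hbker y hy)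
    intro y hy
    exact LinearMap.mem_ker.mp (hsle (Submodule.subset_span hy))
  refine hyperplane_of_perp hm hu ?_
  intro x hx
  have := hYker (lift x) ⟨x, hx, rfl⟩
  rw [Lu_apply] at this
  exact this

end Letendre

theorem card_le_of_general_position (m : ℕ) (hm : 1 ≤ m)
    (N S : Finset (Fin m → ℝ)) (hSN : S ⊆ N)
    (hS : GeneralPosition m S)
    (hmax : ∀ T ⊆ N, GeneralPosition m T → T.card ≤ S.card)
    (K : ℕ)
    (hK : ∀ (w : Fin m → ℝ) (c : ℝ), w ≠ 0 →
        (N.filter (fun x => ∑ i, w i * x i = c)).card ≤ K) :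
    N.card ≤ K * max 1 (S.card.choose m) := by
  rcases le_or_gt S.card m with hSm | hSm
  · -- all of `N` lies on a single hyperplane
    obtain ⟨w, c, hw, hall⟩ := Letendre.exists_hyperplane_all hm hmax hSm
    have h1 : N.filter (fun x => ∑ i, w i * x i = c) = N :=
      Finset.filter_true_of_mem hall
    have h2 : N.card ≤ K := h1 ▸ hK w c hw
    calc N.card ≤ K := h2
      _ = K * 1 := (mul_one K).symm
      _ ≤ K * max 1 (S.card.choose m) := Nat.mul_le_mul_left K (le_max_left _ _)
  · have hcard : m + 1 ≤ S.card := hSm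
    choose! w c hw hwc using fun (T : Finset (Fin m → ℝ)) (hT : T.card ≤ m) =>
      Letendre.exists_hyperplane hm T hT
    have hcover : N ⊆ (S.powersetCard m).biUnion
        (fun T => N.filter (fun x => ∑ i, (w T) i * x i = c T)) := by
      intro x hx
      rw [Finset.mem_biUnion]
      have key : ∃ T ∈ S.powersetCard m, ∑ i, (w T) i * x i = c T := by
        by_cases hxS : x ∈ S
        · have h1 : m - 1 ≤ (S.erase x).card := by
            rw [Finset.card_erase_of_mem hxS]; omega
          obtain ⟨T', hT'sub, hT'card⟩ := Finset.exists_subset_card_eq h1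
          have hxT' : x ∉ T' := fun h => (Finset.mem_erase.mp (hT'sub h)).1 rfl
          have hcardT : (insert x T').card = m := by
            rw [Finset.card_insert_of_notMem hxT', hT'card]; omega
          refine ⟨insert x T', Finset.mem_powersetCard.mpr ⟨?_, hcardT⟩, ?_⟩
          · intro p hp
            rcases Finset.mem_insert.mp hp with rfl | hp
            · exact hxS
            · exact (Finset.mem_erase.mp (hT'sub hp)).2
          · exact hwc _ (le_of_eq hcardT) x (Finset.mem_insert_self x T')
        · have hnotGP : ¬ GeneralPosition m (insert x S) := by
            intro hGP
            have := hmax (insert x S) (Finset.insert_subset hx hSN) hGP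
            rw [Finset.card_insert_of_notMem hxS] at this
            omega
          rw [GeneralPosition] at hnotGP
          push_neg at hnotGP
          obtain ⟨v, hv, hvinj, hD⟩ := hnotGP
          have hD0 : letendreD m v = 0 :=
            le_antisymm hD (Letendre.D_nonneg v)
          obtain ⟨g, hgne, hgsum⟩ := (Letendre.D_eq_zero_iff v).mp hD0
          have hj0 : ∃ j₀, v j₀ = x := by
            by_contra hno
            push_neg at hno
            have hvS : ∀ j, v j ∈ S := fun j =>
              (Finset.mem_insert.mp (hv j)).resolve_left (hno j)
            have := hS v hvS hvinj
            rw [hD0] at this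
            exact lt_irrefl _ this
          obtain ⟨j₀, hj₀⟩ := hj0
          set t : Fin m → (Fin m → ℝ) := fun i => v (j₀.succAbove i) with ht
          have htS : ∀ i, t i ∈ S := by
            intro i
            rcases Finset.mem_insert.mp (hv (j₀.succAbove i)) with h2 | h2
            · exfalso
              have heq : j₀.succAbove i = j₀ := hvinj (by rw [hj₀, ← h2])
              exact Fin.succAbove_ne j₀ i heq
            · exact h2
          have htinj : Function.Injective t := fun a b hab =>
            Fin.succAbove_right_injective (hvinj hab)
          have hsplit : g j₀ • Letendre.lift x
              + ∑ i, g (j₀.succAbove i) • Letendre.lift (t i) = 0 := by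
            rw [← hgsum, Fin.sum_univ_succAbove (fun j => g j • Letendre.lift (v j)) j₀, hj₀]
          have hgj₀ : g j₀ ≠ 0 := by
            intro h0
            rw [h0, zero_smul, zero_add] at hsplit
            have hz := Letendre.combo_m_of_GP hS hcard t htS htinj _ hsplit
            apply hgne
            funext j
            rcases eq_or_ne j j₀ with rfl | hne
            · exact h0
            · obtain ⟨i, hi⟩ := Fin.exists_succAbove_eq hne
              rw [← hi]
              exact congrFun hz i
          set T : Finset (Fin m → ℝ) := Finset.image t Finset.univ with hT
          have hTS : T ⊆ S := by
            intro p hp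
            rw [hT, Finset.mem_image] at hp
            obtain ⟨i, _, rfl⟩ := hp
            exact htS i
          have hTcard : T.card = m := by
            rw [hT, Finset.card_image_of_injective _ htinj, Finset.card_univ,
              Fintype.card_fin]
          have hTm : T.card ≤ m := le_of_eq hTcard
          set u : Fin (m + 1) → ℝ := Fin.cons (-(c T)) (w T) with hu
          have hz : ∀ i, Letendre.Lu u (Letendre.lift (t i)) = 0 := by
            intro i
            rw [hu, Letendre.Lu_cons_lift,
              hwc T hTm (t i) (by rw [hT]; exact Finset.mem_image_of_mem t (Finset.mem_univ i)),
              sub_self]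
          have h1 : Letendre.Lu u (g j₀ • Letendre.lift x
              + ∑ i, g (j₀.succAbove i) • Letendre.lift (t i))
              = g j₀ * ((∑ i, (w T) i * x i) - c T) := by
            rw [map_add, map_smul, map_sum]
            simp only [map_smul, smul_eq_mul, hz, mul_zero, Finset.sum_const_zero, add_zero]
            rw [hu, Letendre.Lu_cons_lift]
          have h2 : g j₀ * ((∑ i, (w T) i * x i) - c T) = 0 := by
            rw [← h1, hsplit, map_zero]
          have h3 : (∑ i, (w T) i * x i) - c T = 0 :=
            (mul_eq_zero.mp h2).resolve_left hgj₀
          exact ⟨T, Finset.mem_powersetCard.mpr ⟨hTS, hTcard⟩, by linarith⟩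
      obtain ⟨T, hTP, hTx⟩ := key
      exact ⟨T, hTP, Finset.mem_filter.mpr ⟨hx, hTx⟩⟩
    calc N.card ≤ ((S.powersetCard m).biUnion
          (fun T => N.filter (fun x => ∑ i, (w T) i * x i = c T))).card :=
        Finset.card_le_card hcover
      _ ≤ ∑ T ∈ S.powersetCard m, (N.filter (fun x => ∑ i, (w T) i * x i = c T)).card :=
        Finset.card_biUnion_le
      _ ≤ ∑ _T ∈ S.powersetCard m, K := by
        refine Finset.sum_le_sum fun T hTP => ?_
        have hTm : T.card ≤ m := le_of_eq (Finset.mem_powersetCard.mp hTP).2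
        exact hK (w T) (c T) (hw T hTm)
      _ = S.card.choose m * K := by
        rw [Finset.sum_const, Finset.card_powersetCard, smul_eq_mul]
      _ ≤ K * max 1 (S.card.choose m) := by
        rw [mul_comm]
        exact Nat.mul_le_mul_left K (le_max_right _ _)
end

section
/- Let Ω ⊂ ℂ be a bounded set with positive diameter d(Ω) := sup_{α_1,α_2 ∈ Ω} |α_2 − α_1|. Let S = {x_1, …, x_S} be a finite set of Gaussian integers contained in Ω, and let Q be a finite set of pairwise coprime Gaussian integers such that for each q ∈ Q, the elements of S lie in at most ν(q) of the N(q) residue classes of ℤ[i]/(q), where N denotes the norm. If ∑_{q ∈ Q} (log N(q))/ν(q) − 2 log d(Ω) > 0, then #S ≤ (∑_{q ∈ Q} log N(q) − 2 log d(Ω)) / (∑_{q ∈ Q} (log N(q))/ν(q) − 2 log d(Ω)). -/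
open GaussianInt

theorem larger_sieve_gaussian
    (Ω : Set ℂ) (hbd : Bornology.IsBounded Ω) (hdiam : 0 < Metric.diam Ω)
    (S : Finset GaussianInt) (hSΩ : ∀ x ∈ S, GaussianInt.toComplex x ∈ Ω)
    (Q : Finset GaussianInt) (hcop : (Q : Set GaussianInt).Pairwise IsCoprime)
    (ν : GaussianInt → ℕ)
    (hclass : ∀ q ∈ Q,
      Set.ncard ((fun x => Ideal.Quotient.mk (Ideal.span {q}) x) '' (S : Set GaussianInt)) ≤ ν q)
    (hden : 0 < ∑ q ∈ Q, Real.log (Zsqrtd.norm q : ℝ) / ν q - 2 * Real.log (Metric.diam Ω)) :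
    (S.card : ℝ) ≤
      (∑ q ∈ Q, Real.log (Zsqrtd.norm q : ℝ) - 2 * Real.log (Metric.diam Ω)) /
        (∑ q ∈ Q, Real.log (Zsqrtd.norm q : ℝ) / ν q - 2 * Real.log (Metric.diam Ω)) := by
  classical
  set d : ℝ := Metric.diam Ω with hd
  set L : ℝ := Real.log d with hLdef
  set k : ℕ := S.card with hk
  set A : ℝ := ∑ q ∈ Q, Real.log (Zsqrtd.norm q : ℝ) with hA
  set B : ℝ := ∑ q ∈ Q, Real.log (Zsqrtd.norm q : ℝ) / ν q with hB
  -- log of norms are nonneg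
  have hnn : ∀ z : GaussianInt, (0:ℤ) ≤ Zsqrtd.norm z := fun z =>
    Zsqrtd.norm_nonneg (by norm_num) z
  have hlognn : ∀ z : GaussianInt, 0 ≤ Real.log (Zsqrtd.norm z : ℝ) := by
    intro z
    rcases eq_or_ne (Zsqrtd.norm z) 0 with h | h
    · simp [h]
    · apply Real.log_nonneg
      have : (1:ℤ) ≤ Zsqrtd.norm z := lt_of_le_of_ne (hnn z) (Ne.symm h)
      exact_mod_cast this
  have hBA : B ≤ A := by
    apply Finset.sum_le_sum
    intro q hq
    rcases Nat.eq_zero_or_pos (ν q) with h | h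
    · rw [h]
      simp only [Nat.cast_zero, div_zero]
      exact hlognn q
    · exact div_le_self (hlognn q) (by exact_mod_cast h)
  rw [le_div_iff₀ hden]
  -- main goal reduced to k * den ≤ num
  rcases le_or_gt k 1 with hk1 | hk2
  · calc (k:ℝ) * (B - 2 * L) ≤ 1 * (B - 2 * L) := by
          apply mul_le_mul_of_nonneg_right _ (le_of_lt hden)
          exact_mod_cast hk1
      _ ≤ A - 2 * L := by rw [one_mul]; linarith
  -- now 2 ≤ k
  have hk2' : (2:ℝ) ≤ (k:ℝ) := by exact_mod_cast hk2
  -- the class count function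
  set t : GaussianInt → ℕ :=
    fun q => (S.offDiag.filter fun p => q ∣ p.1 - p.2).card with htdef
  -- ν q ≥ 1 and counting inequality
  have hCcard : ∀ q ∈ Q,
      (S.image (fun x => Ideal.Quotient.mk (Ideal.span {q}) x)).card ≤ ν q := by
    intro q hq
    have h1 := hclass q hq
    rwa [← Finset.coe_image, Set.ncard_coe_finset] at h1
  have hcount : ∀ q ∈ Q, (k:ℝ)^2 ≤ (ν q : ℝ) * ((t q : ℝ) + k) := by
    intro q hq
    set f : GaussianInt → GaussianInt ⧸ Ideal.span {q} :=
      fun x => Ideal.Quotient.mk (Ideal.span {q}) x with hf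
    set C : Finset (GaussianInt ⧸ Ideal.span {q}) := S.image f with hC
    set n : GaussianInt ⧸ Ideal.span {q} → ℕ :=
      fun c => (S.filter fun x => f x = c).card with hn
    have hkC : k = ∑ c ∈ C, n c :=
      Finset.card_eq_sum_card_fiberwise (fun x hx => Finset.mem_image_of_mem f hx)
    -- pairs with equal residues
    set P : Finset (GaussianInt × GaussianInt) :=
      (S ×ˢ S).filter (fun p => f p.1 = f p.2) with hP
    have hP1 : P.card = ∑ c ∈ C, (P.filter fun p => f p.1 = c).card :=
      Finset.card_eq_sum_card_fiberwise (fun p hp =>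
        Finset.mem_image_of_mem f (Finset.mem_product.mp (Finset.mem_filter.mp hp).1).1)
    have hfib : ∀ c, (P.filter fun p => f p.1 = c) =
        (S.filter fun x => f x = c) ×ˢ (S.filter fun x => f x = c) := by
      intro c
      ext p
      simp only [hP, Finset.mem_filter, Finset.mem_product]
      constructor
      · rintro ⟨⟨⟨h1, h2⟩, he⟩, hc⟩
        exact ⟨⟨h1, hc⟩, ⟨h2, he ▸ hc⟩⟩
      · rintro ⟨⟨h1, hc1⟩, h2, hc2⟩
        exact ⟨⟨⟨h1, h2⟩, hc1.trans hc2.symm⟩, hc1⟩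
    have hPsum : P.card = ∑ c ∈ C, n c * n c := by
      rw [hP1]
      refine Finset.sum_congr rfl (fun c _ => ?_)
      rw [hfib c, Finset.card_product]
    -- split P into diagonal and offdiagonal parts
    have hsplit : (P.filter fun p => p.1 = p.2).card +
        (P.filter fun p => ¬ p.1 = p.2).card = P.card :=
      Finset.card_filter_add_card_filter_not _
    have hdiag : (P.filter fun p => p.1 = p.2) = S.image (fun x => (x, x)) := by
      ext p
      simp only [hP, Finset.mem_filter, Finset.mem_product, Finset.mem_image]
      constructor
      · rintro ⟨⟨⟨h1, _⟩, _⟩, he⟩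
        exact ⟨p.1, h1, Prod.ext rfl he⟩
      · rintro ⟨a, ha, rfl⟩
        exact ⟨⟨⟨ha, ha⟩, rfl⟩, rfl⟩
    have hdiagcard : (P.filter fun p => p.1 = p.2).card = k := by
      rw [hdiag, Finset.card_image_of_injective _ (fun a b h => (Prod.mk.injEq _ _ _ _ ▸ h).1)]
    have hoffd : (P.filter fun p => ¬ p.1 = p.2) =
        (S.offDiag.filter fun p => q ∣ p.1 - p.2) := by
      ext p
      simp only [hP, Finset.mem_filter, Finset.mem_product, Finset.mem_offDiag]
      constructor
      · rintro ⟨⟨⟨h1, h2⟩, he⟩, hne⟩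
        refine ⟨⟨h1, h2, hne⟩, ?_⟩
        have : f p.1 = f p.2 := he
        rwa [hf, Ideal.Quotient.eq, Ideal.mem_span_singleton] at this
      · rintro ⟨⟨h1, h2, hne⟩, hdvd⟩
        refine ⟨⟨⟨h1, h2⟩, ?_⟩, hne⟩
        show f p.1 = f p.2
        rw [hf]
        rwa [Ideal.Quotient.eq, Ideal.mem_span_singleton]
    have hPcard : P.card = k + t q := by
      rw [← hsplit, hdiagcard, hoffd, htdef]
    -- Cauchy–Schwarz
    have hcs : ((∑ c ∈ C, (n c : ℝ)))^2 ≤ (C.card : ℝ) * ∑ c ∈ C, (n c : ℝ)^2 :=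
      sq_sum_le_card_mul_sum_sq
    have hsum2 : ∑ c ∈ C, (n c : ℝ)^2 = (t q : ℝ) + k := by
      have h0 : (∑ c ∈ C, n c * n c : ℕ) = k + t q := by rw [← hPsum, hPcard]
      have h' : ((∑ c ∈ C, n c * n c : ℕ) : ℝ) = (k:ℝ) + t q := by
        rw [h0]; push_cast; ring
      rw [Nat.cast_sum] at h'
      simp only [Nat.cast_mul] at h'
      calc ∑ c ∈ C, (n c : ℝ)^2 = ∑ c ∈ C, (n c : ℝ) * (n c : ℝ) :=
            Finset.sum_congr rfl (fun c _ => by ring)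
        _ = (k:ℝ) + t q := h'
        _ = (t q : ℝ) + k := by ring
    have hkr : (k:ℝ) = ∑ c ∈ C, (n c : ℝ) := by
      rw [hkC]; push_cast; rfl
    have hCν : (C.card : ℝ) ≤ (ν q : ℝ) := by exact_mod_cast hCcard q hq
    have hsum2nn : 0 ≤ ∑ c ∈ C, (n c : ℝ)^2 :=
      Finset.sum_nonneg (fun c _ => sq_nonneg _)
    calc (k:ℝ)^2 = ((∑ c ∈ C, (n c : ℝ)))^2 := by rw [hkr]
      _ ≤ (C.card : ℝ) * ∑ c ∈ C, (n c : ℝ)^2 := hcs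
      _ ≤ (ν q : ℝ) * ∑ c ∈ C, (n c : ℝ)^2 := mul_le_mul_of_nonneg_right hCν hsum2nn
      _ = (ν q : ℝ) * ((t q : ℝ) + k) := by rw [hsum2]
  have hν1 : ∀ q ∈ Q, (1:ℝ) ≤ (ν q : ℝ) := by
    intro q hq
    have h1 := hcount q hq
    by_contra h
    push_neg at h
    have hν0 : (ν q : ℝ) = 0 := by
      have : ν q = 0 := by
        by_contra h0
        have : (1:ℕ) ≤ ν q := Nat.one_le_iff_ne_zero.mpr h0
        exact absurd (by exact_mod_cast this) (not_le.mpr h)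
      simp [this]
    rw [hν0, zero_mul] at h1
    nlinarith
  -- the product Δ
  set Δ : GaussianInt := ∏ p ∈ S.offDiag, (p.1 - p.2) with hΔ
  have hΔ0 : Δ ≠ 0 := by
    rw [hΔ, Finset.prod_ne_zero_iff]
    intro p hp
    exact sub_ne_zero.mpr (Finset.mem_offDiag.mp hp).2.2
  have hdvd : (∏ q ∈ Q, q ^ t q) ∣ Δ := by
    apply Finset.prod_dvd_of_coprime
    · intro a ha b hb hab
      exact (hcop ha hb hab).pow
    · intro q hq
      calc q ^ t q = ∏ _p ∈ (S.offDiag.filter fun p => q ∣ p.1 - p.2), q := by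
            rw [Finset.prod_const]
        _ ∣ ∏ p ∈ (S.offDiag.filter fun p => q ∣ p.1 - p.2), (p.1 - p.2) :=
            Finset.prod_dvd_prod_of_dvd _ _ (fun p hp => (Finset.mem_filter.mp hp).2)
        _ ∣ Δ := Finset.prod_dvd_prod_of_subset _ _ _ (Finset.filter_subset _ _)
  -- norms
  have hNdvd : (∏ q ∈ Q, (Zsqrtd.norm q) ^ t q) ∣ Zsqrtd.norm Δ := by
    have h := map_dvd (Zsqrtd.normMonoidHom (d := -1)) hdvd
    simpa [map_prod, map_pow, Zsqrtd.normMonoidHom] using h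
  have hNΔpos : 0 < Zsqrtd.norm Δ := by
    refine lt_of_le_of_ne (hnn Δ) (Ne.symm ?_)
    exact fun h => hΔ0 ((Zsqrtd.norm_eq_zero_iff (by norm_num) _).mp h)
  have hNprodne : ∀ q ∈ Q, ((Zsqrtd.norm q : ℝ)) ^ t q ≠ 0 := by
    intro q hq h0
    have hz : (Zsqrtd.norm q) ^ t q = 0 := by exact_mod_cast h0
    have : (∏ q ∈ Q, (Zsqrtd.norm q) ^ t q) = 0 := Finset.prod_eq_zero hq hz
    rw [this] at hNdvd
    exact hΔ0 ((Zsqrtd.norm_eq_zero_iff (by norm_num) _).mp (zero_dvd_iff.mp hNdvd))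
  have hNprodpos : (0:ℝ) < ∏ q ∈ Q, ((Zsqrtd.norm q : ℝ)) ^ t q := by
    have hnonneg : (0:ℝ) ≤ ∏ q ∈ Q, ((Zsqrtd.norm q : ℝ)) ^ t q :=
      Finset.prod_nonneg (fun q _ => pow_nonneg (by exact_mod_cast hnn q) _)
    rcases hnonneg.lt_or_eq with h | h
    · exact h
    · exfalso
      obtain ⟨q, hq, h0⟩ := Finset.prod_eq_zero_iff.mp h.symm
      exact hNprodne q hq h0
  have hNle : (∏ q ∈ Q, ((Zsqrtd.norm q : ℝ)) ^ t q) ≤ (Zsqrtd.norm Δ : ℝ) := by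
    have h1 := Int.le_of_dvd hNΔpos hNdvd
    calc (∏ q ∈ Q, ((Zsqrtd.norm q : ℝ)) ^ t q)
        = ((∏ q ∈ Q, (Zsqrtd.norm q) ^ t q : ℤ) : ℝ) := by push_cast; rfl
      _ ≤ (Zsqrtd.norm Δ : ℝ) := by exact_mod_cast h1
  -- upper bound on log norm Δ
  have hNΔ : Zsqrtd.norm Δ = ∏ p ∈ S.offDiag, Zsqrtd.norm (p.1 - p.2) := by
    exact map_prod (Zsqrtd.normMonoidHom (d := -1))
      (fun p : GaussianInt × GaussianInt => p.1 - p.2) S.offDiag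
  have hfacpos : ∀ p ∈ S.offDiag, (0:ℤ) < Zsqrtd.norm (p.1 - p.2) := by
    intro p hp
    refine lt_of_le_of_ne (hnn _) (Ne.symm ?_)
    exact fun h => (sub_ne_zero.mpr (Finset.mem_offDiag.mp hp).2.2)
      ((Zsqrtd.norm_eq_zero_iff (by norm_num) _).mp h)
  have hlogΔ : Real.log (Zsqrtd.norm Δ : ℝ) ≤ (S.offDiag.card : ℝ) * (2 * L) := by
    have h1 : Real.log (Zsqrtd.norm Δ : ℝ) =
        ∑ p ∈ S.offDiag, Real.log (Zsqrtd.norm (p.1 - p.2) : ℝ) := by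
      rw [hNΔ]
      push_cast
      exact Real.log_prod (fun p hp => by
        have := hfacpos p hp
        positivity)
    rw [h1]
    have h2 : ∀ p ∈ S.offDiag, Real.log (Zsqrtd.norm (p.1 - p.2) : ℝ) ≤ 2 * L := by
      intro p hp
      obtain ⟨h1', h2', hne⟩ := Finset.mem_offDiag.mp hp
      have hub : (Zsqrtd.norm (p.1 - p.2) : ℝ) ≤ d^2 := by
        rw [intCast_real_norm, ← Complex.sq_norm, toComplex_sub, ← Complex.dist_eq]
        have hdd : dist (toComplex p.1) (toComplex p.2) ≤ d :=
          Metric.dist_le_diam_of_mem hbd (hSΩ _ h1') (hSΩ _ h2')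
        nlinarith [dist_nonneg (x := toComplex p.1) (y := toComplex p.2)]
      calc Real.log (Zsqrtd.norm (p.1 - p.2) : ℝ) ≤ Real.log (d^2) := by
            apply Real.log_le_log _ hub
            exact_mod_cast hfacpos p hp
        _ = 2 * L := by rw [Real.log_pow]; push_cast; ring
    calc ∑ p ∈ S.offDiag, Real.log (Zsqrtd.norm (p.1 - p.2) : ℝ)
        ≤ ∑ _p ∈ S.offDiag, 2 * L := Finset.sum_le_sum h2
      _ = (S.offDiag.card : ℝ) * (2 * L) := by rw [Finset.sum_const, nsmul_eq_mul]
  have hoffcard : (S.offDiag.card : ℝ) = (k:ℝ)^2 - k := by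
    rw [Finset.offDiag_card]
    have hkk : S.card ≤ S.card * S.card := Nat.le_mul_of_pos_left _ (by omega)
    push_cast [Nat.cast_sub hkk]
    ring
  -- lower bound on log of product
  have hlogprod : ∑ q ∈ Q, (t q : ℝ) * Real.log (Zsqrtd.norm q : ℝ) =
      Real.log (∏ q ∈ Q, ((Zsqrtd.norm q : ℝ)) ^ t q) := by
    rw [Real.log_prod hNprodne]
    exact Finset.sum_congr rfl (fun q _ => by rw [Real.log_pow])
  -- combine
  have hchain : ∑ q ∈ Q, (t q : ℝ) * Real.log (Zsqrtd.norm q : ℝ) ≤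
      ((k:ℝ)^2 - k) * (2 * L) := by
    rw [hlogprod]
    calc Real.log (∏ q ∈ Q, ((Zsqrtd.norm q : ℝ)) ^ t q)
        ≤ Real.log (Zsqrtd.norm Δ : ℝ) := Real.log_le_log hNprodpos hNle
      _ ≤ (S.offDiag.card : ℝ) * (2 * L) := hlogΔ
      _ = ((k:ℝ)^2 - k) * (2 * L) := by rw [hoffcard]
  -- per-q lower bound on t q
  have hlow : ∀ q ∈ Q, ((k:ℝ)^2 / ν q - k) * Real.log (Zsqrtd.norm q : ℝ) ≤
      (t q : ℝ) * Real.log (Zsqrtd.norm q : ℝ) := by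
    intro q hq
    apply mul_le_mul_of_nonneg_right _ (hlognn q)
    have hνpos : (0:ℝ) < (ν q : ℝ) := lt_of_lt_of_le one_pos (hν1 q hq)
    have hcq := hcount q hq
    rw [sub_le_iff_le_add, div_le_iff₀ hνpos]
    nlinarith
  have hsieve : ∑ q ∈ Q, ((k:ℝ)^2 / ν q - k) * Real.log (Zsqrtd.norm q : ℝ) ≤
      ((k:ℝ)^2 - k) * (2 * L) :=
    le_trans (Finset.sum_le_sum hlow) hchain
  -- expand the sieve sum
  have hexp : ∑ q ∈ Q, ((k:ℝ)^2 / ν q - k) * Real.log (Zsqrtd.norm q : ℝ) =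
      (k:ℝ)^2 * B - (k:ℝ) * A := by
    rw [hA, hB, Finset.mul_sum, Finset.mul_sum, ← Finset.sum_sub_distrib]
    exact Finset.sum_congr rfl (fun q _ => by ring)
  rw [hexp] at hsieve
  -- final algebra: k^2 * B - k * A ≤ (k^2 - k) * 2L  ⟹  k * (B - 2L) ≤ A - 2L
  have hkpos : (0:ℝ) < k := by linarith
  have hstep1 : (k:ℝ) * ((k:ℝ) * B - A) ≤ (k:ℝ) * (2 * L * ((k:ℝ) - 1)) := by
    nlinarith
  have hstep2 : (k:ℝ) * B - A ≤ 2 * L * ((k:ℝ) - 1) :=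
    le_of_mul_le_mul_left (by linarith [hstep1]) hkpos
  linarith
end

section
/- Let S be a finite set of integers in an interval of length M > 0, and let Q be a finite set of pairwise coprime integers q ≥ 2 such that the elements of S lie in at most ν(q) residue classes modulo q for each q ∈ Q (1 ≤ ν(q) ≤ q). For each q ∈ Q, partitioning S into classes of sizes S_1, …, S_{ν(q)}, one has ∑_{r=1}^{ν(q)} C(S_r, 2) ≥ S²/(2ν(q)) − S/2 where S = #S; consequently ∏_{q ∈ Q} q^{S²/(2ν(q)) − S/2} ≤ M^{C(S,2)} whenever S ≥ 2. -/
lemma two_mul_choose_two' (n : ℕ) : 2 * n.choose 2 + n = n ^ 2 := by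
  induction n with
  | zero => simp
  | succ n ih =>
      rw [Nat.choose_succ_succ, Nat.choose_one_right]
      nlinarith [ih]

lemma choose_two_real' (n : ℕ) : (n.choose 2 : ℝ) = ((n : ℝ) ^ 2 - n) / 2 := by
  have h := two_mul_choose_two' n
  have : (2 * n.choose 2 + n : ℝ) = (n : ℝ) ^ 2 := by exact_mod_cast congrArg (Nat.cast (R := ℝ)) h
  push_cast at this
  linarith

theorem larger_sieve_core_inequality
    (S : Finset ℤ) (Q : Finset ℤ) (ν : ℤ → ℕ) (N M : ℝ) (hM : 0 < M)
    (hS : ∀ x ∈ S, N ≤ (x : ℝ) ∧ (x : ℝ) ≤ N + M)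
    (hQ2 : ∀ q ∈ Q, 2 ≤ q)
    (hcop : (Q : Set ℤ).Pairwise IsCoprime)
    (hν : ∀ q ∈ Q, 1 ≤ ν q ∧ (ν q : ℤ) ≤ q)
    (hclass : ∀ q ∈ Q, (S.image (fun x => x % q)).card ≤ ν q) :
    (∀ q ∈ Q,
      (S.card : ℝ) ^ 2 / (2 * ν q) - S.card / 2 ≤
        ∑ r ∈ S.image (fun x => x % q), (((S.filter (fun x => x % q = r)).card.choose 2 : ℝ))) ∧
    (2 ≤ S.card →
      ∏ q ∈ Q, (q : ℝ) ^ ((S.card : ℝ) ^ 2 / (2 * ν q) - S.card / 2) ≤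
        M ^ (S.card.choose 2)) := by
  classical
  -- notation
  set n := S.card with hn
  -- Part 1
  have part1 : ∀ q ∈ Q,
      (n : ℝ) ^ 2 / (2 * ν q) - n / 2 ≤
        ∑ r ∈ S.image (fun x => x % q), (((S.filter (fun x => x % q = r)).card.choose 2 : ℝ)) := by
    intro q hq
    rcases S.eq_empty_or_nonempty with hSe | hSne
    · simp [hSe, hn]
    · set I := S.image (fun x => x % q) with hI
      have hksum : ∑ r ∈ I, ((S.filter (fun x => x % q = r)).card : ℝ) = (n : ℝ) := by
        rw [hn]
        exact_mod_cast (congrArg (Nat.cast (R := ℝ))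
          (Finset.card_eq_sum_card_image (fun x => x % q) S)).symm
      have hCS : ((n : ℝ)) ^ 2 ≤ (I.card : ℝ) *
          ∑ r ∈ I, ((S.filter (fun x => x % q = r)).card : ℝ) ^ 2 := by
        have := sq_sum_le_card_mul_sum_sq (s := I)
          (f := fun r => ((S.filter (fun x => x % q = r)).card : ℝ))
        rwa [hksum] at this
      have hk1 : (1 : ℝ) ≤ I.card := by
        have : I.Nonempty := hSne.image _
        exact_mod_cast this.card_pos
      have hkν : (I.card : ℝ) ≤ ν q := by exact_mod_cast hclass q hq
      have hν1 : (1 : ℝ) ≤ ν q := by exact_mod_cast (hν q hq).1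
      have hsumsq : (n : ℝ) ^ 2 / (ν q) ≤
          ∑ r ∈ I, ((S.filter (fun x => x % q = r)).card : ℝ) ^ 2 := by
        have hnn : 0 ≤ ∑ r ∈ I, ((S.filter (fun x => x % q = r)).card : ℝ) ^ 2 :=
          Finset.sum_nonneg fun r _ => sq_nonneg _
        have h2 : ((n : ℝ)) ^ 2 ≤ (ν q : ℝ) *
            ∑ r ∈ I, ((S.filter (fun x => x % q = r)).card : ℝ) ^ 2 :=
          hCS.trans (mul_le_mul_of_nonneg_right hkν hnn)
        rw [div_le_iff₀ (by linarith)]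
        linarith [h2]
      have hrw : ∑ r ∈ I, (((S.filter (fun x => x % q = r)).card.choose 2 : ℝ)) =
          (∑ r ∈ I, ((S.filter (fun x => x % q = r)).card : ℝ) ^ 2 - (n : ℝ)) / 2 := by
        rw [← hksum]
        rw [← Finset.sum_sub_distrib, Finset.sum_div]
        exact Finset.sum_congr rfl fun r _ => choose_two_real' _
      rw [hrw]
      have h2ν : (n : ℝ) ^ 2 / (2 * ν q) = ((n : ℝ) ^ 2 / ν q) / 2 := by
        rw [div_div]; ring_nf
      rw [h2ν]
      linarith
  refine ⟨part1, ?_⟩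
  -- Part 2
  intro hn2
  set e : ℤ → ℕ := fun q =>
    ∑ r ∈ S.image (fun x => x % q), ((S.filter (fun x => x % q = r)).card.choose 2) with he
  set D : ℤ := ∏ p ∈ S.offDiag, (p.1 - p.2) with hD
  have hDne : D ≠ 0 := by
    rw [hD]
    exact Finset.prod_ne_zero_iff.mpr fun p hp =>
      sub_ne_zero.mpr (Finset.mem_offDiag.mp hp).2.2
  -- divisibility for each q
  have hdvd : ∀ q ∈ Q, (q : ℤ) ^ (2 * e q) ∣ D := by
    intro q hq
    set I := S.image (fun x => x % q) with hI
    have hdisj : (I : Set ℤ).PairwiseDisjoint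
        (fun r => (S.filter (fun x => x % q = r)).offDiag) := by
      intro r _ r' _ hrr'
      refine Finset.disjoint_left.mpr fun p hp hp' => ?_
      have h1 := (Finset.mem_filter.mp (Finset.mem_offDiag.mp hp).1).2
      have h2 := (Finset.mem_filter.mp (Finset.mem_offDiag.mp hp').1).2
      exact hrr' (h1 ▸ h2 ▸ rfl)
    have hsub : I.biUnion (fun r => (S.filter (fun x => x % q = r)).offDiag) ⊆ S.offDiag := by
      intro p hp
      rcases Finset.mem_biUnion.mp hp with ⟨r, _, hpr⟩
      have h := Finset.mem_offDiag.mp hpr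
      exact Finset.mem_offDiag.mpr ⟨(Finset.mem_filter.mp h.1).1,
        (Finset.mem_filter.mp h.2.1).1, h.2.2⟩
    have step1 : (q : ℤ) ^ (2 * e q) ∣
        ∏ p ∈ I.biUnion (fun r => (S.filter (fun x => x % q = r)).offDiag), (p.1 - p.2) := by
      rw [Finset.prod_biUnion hdisj]
      have : (q : ℤ) ^ (2 * e q) = ∏ r ∈ I, (q : ℤ) ^ (2 * (S.filter (fun x => x % q = r)).card.choose 2) := by
        simp only [he, Finset.mul_sum]
        rw [← Finset.prod_pow_eq_pow_sum]
      rw [this]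
      refine Finset.prod_dvd_prod_of_dvd _ _ fun r _ => ?_
      have hcard : (S.filter (fun x => x % q = r)).offDiag.card =
          2 * (S.filter (fun x => x % q = r)).card.choose 2 := by
        rw [Finset.offDiag_card]
        have h := two_mul_choose_two' (S.filter (fun x => x % q = r)).card
        have hsq : (S.filter (fun x => x % q = r)).card ^ 2 =
            (S.filter (fun x => x % q = r)).card * (S.filter (fun x => x % q = r)).card :=
          pow_two _
        omega
      rw [← hcard, ← Finset.prod_const]
      refine Finset.prod_dvd_prod_of_dvd _ _ fun p hp => ?_
      have h := Finset.mem_offDiag.mp hp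
      have h1 := (Finset.mem_filter.mp h.1).2
      have h2 := (Finset.mem_filter.mp h.2.1).2
      have : p.1 % q = p.2 % q := h1.trans h2.symm
      exact Int.ModEq.dvd (this.symm : Int.ModEq q p.2 p.1)
    exact step1.trans (Finset.prod_dvd_prod_of_subset _ _ _ hsub)
  -- combine over Q
  have hPdvd : (∏ q ∈ Q, (q : ℤ) ^ (2 * e q)) ∣ D := by
    refine Finset.prod_dvd_of_coprime ?_ hdvd
    intro a ha b hb hab
    exact ((hcop ha hb hab).pow)
  have hPpos : 0 < ∏ q ∈ Q, (q : ℤ) ^ (2 * e q) :=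
    Finset.prod_pos fun q hq => pow_pos (by linarith [hQ2 q hq]) _
  have hPle : (∏ q ∈ Q, (q : ℤ) ^ (2 * e q)) ≤ |D| :=
    Int.le_of_dvd (abs_pos.mpr hDne) ((dvd_abs _ _).mpr hPdvd)
  -- M ≥ 1
  obtain ⟨x, hx, y, hy, hxy⟩ := Finset.one_lt_card.mp (by omega : 1 < S.card)
  have hM1 : (1 : ℝ) ≤ M := by
    have h1 : (1 : ℤ) ≤ |x - y| := Int.one_le_abs (sub_ne_zero.mpr hxy)
    have h1' : (1 : ℝ) ≤ |(x : ℝ) - y| := by exact_mod_cast h1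
    have hxb := hS x hx
    have hyb := hS y hy
    have : |(x : ℝ) - y| ≤ M := abs_sub_le_iff.mpr ⟨by linarith, by linarith⟩
    linarith
  -- bound |D| by M ^ (2 * C2)
  have hoffcard : S.offDiag.card = 2 * n.choose 2 := by
    rw [Finset.offDiag_card, ← hn]
    have h := two_mul_choose_two' n
    have hsq : n ^ 2 = n * n := pow_two _
    omega
  have hDabs : ((|D| : ℤ) : ℝ) ≤ M ^ (2 * n.choose 2) := by
    rw [hD, ← hoffcard, Finset.abs_prod]
    push_cast
    calc ∏ p ∈ S.offDiag, |(p.1 : ℝ) - (p.2 : ℝ)|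
        ≤ ∏ _p ∈ S.offDiag, M := by
          refine Finset.prod_le_prod (fun p _ => abs_nonneg _) fun p hp => ?_
          have h := Finset.mem_offDiag.mp hp
          have h1 := hS p.1 h.1
          have h2 := hS p.2 h.2.1
          exact abs_sub_le_iff.mpr ⟨by linarith, by linarith⟩
      _ = M ^ S.offDiag.card := Finset.prod_const M
  -- real version of the product bound
  have hProd2 : (∏ q ∈ Q, (q : ℝ) ^ (e q)) ^ 2 ≤ (M ^ n.choose 2) ^ 2 := by
    have hcast : ((∏ q ∈ Q, (q : ℤ) ^ (2 * e q) : ℤ) : ℝ) = ∏ q ∈ Q, (q : ℝ) ^ (2 * e q) := by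
      push_cast; rfl
    have h1 : (∏ q ∈ Q, (q : ℝ) ^ (2 * e q)) ≤ M ^ (2 * n.choose 2) := by
      rw [← hcast]
      exact le_trans (by exact_mod_cast hPle) hDabs
    calc (∏ q ∈ Q, (q : ℝ) ^ (e q)) ^ 2
        = ∏ q ∈ Q, (q : ℝ) ^ (2 * e q) := by
          rw [← Finset.prod_pow]
          exact Finset.prod_congr rfl fun q _ => by rw [← pow_mul, mul_comm]
      _ ≤ M ^ (2 * n.choose 2) := h1
      _ = (M ^ n.choose 2) ^ 2 := by rw [← pow_mul, mul_comm]
  have hProdNonneg : 0 ≤ ∏ q ∈ Q, (q : ℝ) ^ (e q) :=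
    Finset.prod_nonneg fun q hq => pow_nonneg (by exact_mod_cast (by linarith [hQ2 q hq] : (0:ℤ) ≤ q)) _
  have hMC2 : (0 : ℝ) ≤ M ^ n.choose 2 := pow_nonneg hM.le _
  have hProdle : (∏ q ∈ Q, (q : ℝ) ^ (e q)) ≤ M ^ n.choose 2 :=
    (pow_le_pow_iff_left₀ hProdNonneg hMC2 two_ne_zero).mp hProd2
  -- compare rpow with nat pow
  refine le_trans (Finset.prod_le_prod (fun q hq => ?_) fun q hq => ?_) hProdle
  · exact Real.rpow_nonneg (by exact_mod_cast (by linarith [hQ2 q hq] : (0:ℤ) ≤ q)) _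
  · have hq1 : (1 : ℝ) ≤ (q : ℝ) := by exact_mod_cast (by linarith [hQ2 q hq] : (1:ℤ) ≤ q)
    have hle : (n : ℝ) ^ 2 / (2 * ν q) - n / 2 ≤ ((e q : ℕ) : ℝ) := by
      refine le_trans (part1 q hq) (le_of_eq ?_)
      simp only [he]
      push_cast
      rfl
    calc (q : ℝ) ^ ((n : ℝ) ^ 2 / (2 * ν q) - n / 2)
        ≤ (q : ℝ) ^ ((e q : ℕ) : ℝ) := Real.rpow_le_rpow_of_exponent_le hq1 hle
      _ = (q : ℝ) ^ (e q) := Real.rpow_natCast _ _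
end
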